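/- arXiv:1511.00224 — 9 statements merged into one kernel-verified Lean document; each statement's English description precedes it below -/
import Mathlib

section
/- For every probability distribution p = (p_k) on ℕ with p_k > 0 for all k, every real γ₁ > 0 and every s ∈ {2,3,4}, the operator B_s = Σ_{k=0}^{s−1} γ₁^{s−1−k} A^k is injective on its domain: if v ∈ D(A^{s−1}) ⊆ ℂ^ℕ and B_s v = 0, then v = 0. -/
open scoped BigOperators

noncomputable section

/-- Tail sum `q_l = Σ_{k ≥ l} p_k`. -/
def qtail (p : ℕ → ℝ) (l : ℕ) : ℝ := ∑' k, p (l + k)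

/-- The operator `A` on complex sequences: `(A v)(l) = (1/q_l) Σ_{k=l}^∞ p_k v(k)`. -/
def opA (p : ℕ → ℝ) (v : ℕ → ℂ) : ℕ → ℂ :=
  fun l => (1 / (qtail p l : ℂ)) * ∑' k, (p (l + k) : ℂ) * v (l + k)

/-- Membership in the domain `D(A) = {v : Σ_k p_k |v(k)| < ∞}`. -/
def memDA (p : ℕ → ℝ) (v : ℕ → ℂ) : Prop :=
  Summable fun k => p k * ‖v k‖

/-- Membership in the domain `D(A^m) = {v : A^k v ∈ D(A) for k = 0,…,m-1}`. -/
def memDAiter (p : ℕ → ℝ) (m : ℕ) (v : ℕ → ℂ) : Prop :=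
  ∀ k < m, memDA p ((opA p)^[k] v)

/-- The operator `B_s = Σ_{k=0}^{s-1} γ₁^{s-1-k} A^k`. -/
def opB (p : ℕ → ℝ) (γ₁ : ℝ) (s : ℕ) (v : ℕ → ℂ) : ℕ → ℂ :=
  fun l => ∑ k ∈ Finset.range s, (γ₁ : ℂ) ^ (s - 1 - k) * ((opA p)^[k] v) l

lemma qtail_pos (p : ℕ → ℝ) (hp : ∀ k, 0 < p k) (hs : Summable p) (l : ℕ) :
    0 < qtail p l := by
  have h : Summable (fun k => p (l + k)) := by
    simpa [add_comm] using (summable_nat_add_iff l).2 hs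
  exact Summable.tsum_pos h (fun i => (hp _).le) 0 (hp _)

lemma summable_shift (p : ℕ → ℝ) (hp : ∀ k, 0 < p k) {v : ℕ → ℂ}
    (hv : memDA p v) (l : ℕ) : Summable (fun k => (p (l + k) : ℂ) * v (l + k)) := by
  have h : Summable (fun k => p k * ‖v k‖) := hv
  have h2 : Summable (fun k => p (l + k) * ‖v (l + k)‖) := by
    simpa [add_comm] using (summable_nat_add_iff l).2 h
  apply Summable.of_norm
  convert h2 using 2 with k
  rw [norm_mul, Complex.norm_of_nonneg (hp (l+k)).le]

/-- If `Re λ ≤ 0`, `λ ≠ 0`, `v ∈ D(A)` and `A v = λ v` pointwise, then `v = 0`. -/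
lemma eigen_zero (p : ℕ → ℝ) (hp : ∀ k, 0 < p k) (hsum : Summable p)
    (lam : ℂ) (hlam : lam ≠ 0) (hre : lam.re ≤ 0) (v : ℕ → ℂ) (hv : memDA p v)
    (heig : ∀ l, opA p v l = lam * v l) : v = 0 := by
  set S : ℕ → ℂ := fun l => ∑' k, (p (l + k) : ℂ) * v (l + k) with hS
  have hq : ∀ l, 0 < qtail p l := qtail_pos p hp hsum
  have hqC : ∀ l, (qtail p l : ℂ) ≠ 0 := fun l => by
    exact_mod_cast (hq l).ne'
  -- S l = lam * q_l * v l
  have key1 : ∀ l, S l = lam * (qtail p l : ℂ) * v l := by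
    intro l
    have := heig l
    rw [opA] at this
    field_simp [hqC l] at this
    show (∑' k, (p (l + k) : ℂ) * v (l + k)) = lam * (qtail p l : ℂ) * v l
    rw [this]; ring
  -- S l = p l * v l + S (l+1)
  have key2 : ∀ l, S l = (p l : ℂ) * v l + S (l + 1) := by
    intro l
    have hsumm := summable_shift p hp hv l
    have h0 := Summable.tsum_eq_zero_add hsumm
    calc S l = (p (l + 0) : ℂ) * v (l + 0) + ∑' k, (p (l + (k + 1)) : ℂ) * v (l + (k + 1)) := h0
      _ = (p l : ℂ) * v l + S (l + 1) := by
          simp only [add_zero]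
          congr 1
          show (∑' k, (p (l + (k + 1)) : ℂ) * v (l + (k + 1)))
              = ∑' k, (p (l + 1 + k) : ℂ) * v (l + 1 + k)
          apply tsum_congr
          intro k
          rw [show l + (k + 1) = l + 1 + k from by omega]
  -- modulus inequality : |lam * q - p| ≥ |lam| * q
  have hineq : ∀ l, ‖lam‖ * qtail p l ≤ ‖lam * (qtail p l : ℂ) - (p l : ℂ)‖ := by
    intro l
    have h1 : (‖lam‖ * qtail p l)^2 ≤ (‖lam * (qtail p l : ℂ) - (p l : ℂ)‖)^2 := by
      rw [mul_pow, Complex.sq_norm, Complex.sq_norm]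
      simp [Complex.normSq_apply, Complex.sub_re, Complex.sub_im, Complex.mul_re, Complex.mul_im]
      nlinarith [hq l, hp l, sq_nonneg lam.im, hre, mul_nonneg (mul_nonneg (neg_nonneg.2 hre) (hq l).le) (hp l).le]
    have h2 : 0 ≤ ‖lam‖ * qtail p l := mul_nonneg (norm_nonneg _) (hq l).le
    nlinarith [norm_nonneg (lam * (qtail p l : ℂ) - (p l : ℂ))]
  -- |S l| ≤ |S (l+1)|
  have hmono : ∀ l, ‖S l‖ ≤ ‖S (l + 1)‖ := by
    intro l
    have e1 : S (l + 1) = (lam * (qtail p l : ℂ) - (p l : ℂ)) * v l := by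
      have := key2 l
      rw [key1 l] at this
      linear_combination -this
    rw [e1, key1 l, norm_mul, norm_mul, norm_mul,
      Complex.norm_of_nonneg (hq l).le]
    exact mul_le_mul_of_nonneg_right (hineq l) (norm_nonneg _)
  have hmono' : ∀ l m, l ≤ m → ‖S l‖ ≤ ‖S m‖ :=
    fun l m hlm => monotone_nat_of_le_succ hmono hlm
  -- tail bound and limit
  have habs : ∀ m, ‖S m‖ ≤ ∑' k, p (m + k) * ‖v (m + k)‖ := by
    intro m
    have hsumm : Summable (fun k => p (m + k) * ‖v (m + k)‖) := by
      simpa [add_comm] using (summable_nat_add_iff m).2 hv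
    calc ‖S m‖ ≤ ∑' k, ‖(p (m + k) : ℂ) * v (m + k)‖ := by
          apply norm_tsum_le_tsum_norm
          apply hsumm.congr
          intro k
          simp [norm_mul,
            abs_of_nonneg (hp (m + k)).le]
      _ = ∑' k, p (m + k) * ‖v (m + k)‖ := by
          apply tsum_congr; intro k
          simp [norm_mul,
            abs_of_nonneg (hp (m + k)).le]
  have htend : Filter.Tendsto (fun m => ∑' k, p (m + k) * ‖v (m + k)‖)
      Filter.atTop (nhds 0) := by
    have := tendsto_sum_nat_add (fun k => p k * ‖v k‖)
    refine this.congr fun m => ?_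
    apply tsum_congr; intro k; rw [add_comm]
  have hSzero : ∀ l, S l = 0 := by
    intro l
    have : ‖S l‖ ≤ 0 := by
      apply ge_of_tendsto htend
      filter_upwards [Filter.eventually_ge_atTop l] with m hm
      exact le_trans (hmono' l m hm) (habs m)
    have := le_antisymm this (norm_nonneg _)
    exact norm_eq_zero.1 this
  funext l
  have := key1 l
  rw [hSzero l] at this
  have hv0 : lam * (qtail p l : ℂ) * v l = 0 := this.symm
  rcases mul_eq_zero.1 hv0 with h | h
  · exact absurd (mul_eq_zero.1 h) (by simp [hlam, hqC l])
  · simpa using h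

lemma memDA_comb (p : ℕ → ℝ) (hp : ∀ k, 0 < p k) (f g : ℕ → ℂ)
    (hf : memDA p f) (hg : memDA p g) (c : ℂ) :
    memDA p (fun n => f n + c * g n) := by
  apply Summable.of_nonneg_of_le
    (fun k => mul_nonneg (hp k).le (norm_nonneg _))
    (fun k => ?_) (hf.add (hg.mul_left (‖c‖)))
  have h1 : ‖f k + c * g k‖ ≤ ‖f k‖ + ‖c‖ * ‖g k‖ := by
    refine le_trans (norm_add_le _ _) ?_
    rw [norm_mul]
  calc p k * ‖f k + c * g k‖
      ≤ p k * (‖f k‖ + ‖c‖ * ‖g k‖) :=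
        mul_le_mul_of_nonneg_left h1 (hp k).le
    _ = p k * ‖f k‖ + ‖c‖ * (p k * ‖g k‖) := by ring

lemma opA_comb (p : ℕ → ℝ) (hp : ∀ k, 0 < p k) (f g : ℕ → ℂ)
    (hf : memDA p f) (hg : memDA p g) (c : ℂ) (l : ℕ) :
    opA p (fun n => f n + c * g n) l = opA p f l + c * opA p g l := by
  have hf' := summable_shift p hp hf l
  have hg' := summable_shift p hp hg l
  unfold opA
  have key : (∑' k, (p (l + k) : ℂ) * (f (l + k) + c * g (l + k)))
      = (∑' k, (p (l + k) : ℂ) * f (l + k)) + c * ∑' k, (p (l + k) : ℂ) * g (l + k) := by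
    rw [← tsum_mul_left]
    rw [← Summable.tsum_add hf' (hg'.mul_left c)]
    apply tsum_congr
    intro k
    ring
  rw [key]
  ring

/-- For any probability distribution `p` on `ℕ` with all masses positive, any `γ₁ > 0`
and any `s ∈ {2,3,4}`, the operator `B_s` is injective on `D(A^{s-1}) ⊆ ℂ^ℕ`. -/
theorem injective_opB_s_two_three_four
    (p : ℕ → ℝ) (hp : ∀ k, 0 < p k) (hsum : HasSum p 1)
    (γ₁ : ℝ) (hγ₁ : 0 < γ₁) (s : ℕ) (hs : s = 2 ∨ s = 3 ∨ s = 4)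
    (v : ℕ → ℂ) (hv : memDAiter p (s - 1) v) (hBv : opB p γ₁ s v = 0) :
    v = 0 := by
  have hv : ∀ k < s - 1, memDA p ((opA p)^[k] v) := hv
  have hsummable : Summable p := hsum.summable
  have hγC : (γ₁ : ℂ) ≠ 0 := by exact_mod_cast hγ₁.ne'
  rcases hs with h | h | h
  · -- s = 2
    subst h
    have hv0 : memDA p v := hv 0 (by norm_num)
    have heq : ∀ l, opA p v l = (-(γ₁ : ℂ)) * v l := by
      intro l
      have hB := congrFun hBv l
      simp only [opB, Finset.sum_range_succ, Finset.sum_range_zero,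
        Function.iterate_one, Function.iterate_zero, id_eq, Pi.zero_apply,
        zero_add] at hB
      norm_num at hB
      linear_combination hB
    exact eigen_zero p hp hsummable _ (neg_ne_zero.2 hγC) (by simp [hγ₁.le]) v hv0 heq
  · -- s = 3
    subst h
    have hv0 : memDA p v := hv 0 (by norm_num)
    have hv1 : memDA p (opA p v) := by
      have := hv 1 (by norm_num); simpa using this
    set rt3 : ℝ := Real.sqrt 3 with hrt3def
    have hrt3 : rt3 ^ 2 = 3 := Real.sq_sqrt (by norm_num)
    set lam : ℂ := ⟨-γ₁ / 2, γ₁ * rt3 / 2⟩ with hlamdef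
    set mu : ℂ := ⟨-γ₁ / 2, -(γ₁ * rt3) / 2⟩ with hmudef
    have hsum_lm : lam + mu = -(γ₁ : ℂ) := by
      apply Complex.ext <;>
        simp [hlamdef, hmudef, Complex.add_re, Complex.add_im] <;> ring
    have hprod : lam * mu = (γ₁ : ℂ) ^ 2 := by
      apply Complex.ext <;>
        simp [hlamdef, hmudef, Complex.mul_re, Complex.mul_im, pow_two] <;>
        nlinarith [hrt3]
    have hlam_ne : lam ≠ 0 := fun h => by
      have := congrArg Complex.re h
      simp [hlamdef] at this
      linarith
    have hmu_ne : mu ≠ 0 := fun h => by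
      have := congrArg Complex.re h
      simp [hmudef] at this
      linarith
    have hlam_re : lam.re ≤ 0 := by simp [hlamdef]; linarith
    have hmu_re : mu.re ≤ 0 := by simp [hmudef]; linarith
    have hw : memDA p (fun n => opA p v n + (-mu) * v n) :=
      memDA_comb p hp _ _ hv1 hv0 (-mu)
    have heigw : ∀ l, opA p (fun n => opA p v n + (-mu) * v n) l
        = lam * (opA p v l + (-mu) * v l) := by
      intro l
      have hlin := opA_comb p hp (opA p v) v hv1 hv0 (-mu) l
      have hB := congrFun hBv l
      simp only [opB, Finset.sum_range_succ, Finset.sum_range_zero,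
        Function.iterate_succ, Function.iterate_zero, Function.comp_apply, id_eq,
        Pi.zero_apply, zero_add] at hB
      norm_num at hB
      rw [hlin]
      linear_combination hB + (v l) * hprod - (opA p v l) * hsum_lm
    have hw0 := eigen_zero p hp hsummable lam hlam_ne hlam_re _ hw heigw
    have heqv : ∀ l, opA p v l = mu * v l := by
      intro l
      have := congrFun hw0 l
      simp only [Pi.zero_apply] at this
      linear_combination this
    exact eigen_zero p hp hsummable mu hmu_ne hmu_re v hv0 heqv
  · -- s = 4
    subst h
    have hv0 : memDA p v := hv 0 (by norm_num)
    have hv1 : memDA p (opA p v) := by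
      have := hv 1 (by norm_num); simpa using this
    have hv2 : memDA p (opA p (opA p v)) := by
      have := hv 2 (by norm_num)
      simpa [Function.iterate_succ, Function.comp] using this
    have hI : (Complex.I) ^ 2 = -1 := Complex.I_sq
    -- step 1 : u = A² v + γ² v is an eigenvector for -γ
    have hu : memDA p (fun n => opA p (opA p v) n + ((γ₁ : ℂ) ^ 2) * v n) :=
      memDA_comb p hp _ _ hv2 hv0 _
    have heigu : ∀ l, opA p (fun n => opA p (opA p v) n + ((γ₁ : ℂ) ^ 2) * v n) l
        = (-(γ₁ : ℂ)) * (opA p (opA p v) l + ((γ₁ : ℂ) ^ 2) * v l) := by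
      intro l
      have hlin := opA_comb p hp (opA p (opA p v)) v hv2 hv0 ((γ₁ : ℂ) ^ 2) l
      have hB := congrFun hBv l
      simp only [opB, Finset.sum_range_succ, Finset.sum_range_zero,
        Function.iterate_succ, Function.iterate_zero, Function.comp_apply, id_eq,
        Pi.zero_apply, zero_add] at hB
      norm_num at hB
      rw [hlin]
      linear_combination hB
    have hu0 := eigen_zero p hp hsummable (-(γ₁ : ℂ)) (neg_ne_zero.2 hγC)
      (by simp [hγ₁.le]) _ hu heigu
    have hA2 : ∀ l, opA p (opA p v) l = -(γ₁ : ℂ) ^ 2 * v l := by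
      intro l
      have := congrFun hu0 l
      simp only [Pi.zero_apply] at this
      linear_combination this
    -- step 2 : w = A v + iγ v is an eigenvector for iγ
    have hw : memDA p (fun n => opA p v n + ((γ₁ : ℂ) * Complex.I) * v n) :=
      memDA_comb p hp _ _ hv1 hv0 _
    have heigw : ∀ l, opA p (fun n => opA p v n + ((γ₁ : ℂ) * Complex.I) * v n) l
        = ((γ₁ : ℂ) * Complex.I) * (opA p v l + ((γ₁ : ℂ) * Complex.I) * v l) := by
      intro l
      have hlin := opA_comb p hp (opA p v) v hv1 hv0 ((γ₁ : ℂ) * Complex.I) l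
      rw [hlin]
      linear_combination (hA2 l) - (γ₁ : ℂ) ^ 2 * (v l) * hI
    have hiγ_ne : (γ₁ : ℂ) * Complex.I ≠ 0 := mul_ne_zero hγC Complex.I_ne_zero
    have hiγ_re : ((γ₁ : ℂ) * Complex.I).re ≤ 0 := by simp
    have hw0 := eigen_zero p hp hsummable ((γ₁ : ℂ) * Complex.I) hiγ_ne hiγ_re _ hw heigw
    have heqv : ∀ l, opA p v l = (-(γ₁ : ℂ) * Complex.I) * v l := by
      intro l
      have := congrFun hw0 l
      simp only [Pi.zero_apply] at this
      linear_combination this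
    have hmiγ_ne : -(γ₁ : ℂ) * Complex.I ≠ 0 := by
      simpa using mul_ne_zero hγC Complex.I_ne_zero
    have hmiγ_re : (-(γ₁ : ℂ) * Complex.I).re ≤ 0 := by simp
    exact eigen_zero p hp hsummable (-(γ₁ : ℂ) * Complex.I) hmiγ_ne hmiγ_re v hv0 heqv
end
end

section
/- For every integer s ≥ 5, every real γ₁ ≥ 1, and the geometric distribution p_k = θ(1−θ)^k whose parameter θ ∈ (0,1) satisfies θ < 2·cos(2π/5), the identity sequence id(k) = k belongs to D(A^s) and the operator B_s = Σ_{k=0}^{s−1} γ₁^{s−1−k} A^k is not injective: there exists a nonzero v ∈ D(A^{s−1}) ⊆ ℂ^ℕ with B_s v = 0. -/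
open scoped BigOperators

noncomputable section

lemma qtail_geo {θ : ℝ} (hθ0 : 0 < θ) (hθ1 : θ < 1) (l : ℕ) :
    qtail (fun k => θ * (1 - θ) ^ k) l = (1 - θ) ^ l := by
  unfold qtail
  have h1 : ∀ k : ℕ, θ * (1 - θ) ^ (l + k) = (θ * (1 - θ) ^ l) * (1 - θ) ^ k := by
    intro k; rw [pow_add]; ring
  rw [tsum_congr h1, tsum_mul_left, tsum_geometric_of_lt_one (by linarith) (by linarith)]
  have h2 : (1 : ℝ) - (1 - θ) = θ := by ring
  rw [h2]
  field_simp

lemma theta_ne {θ : ℝ} (hθ0 : 0 < θ) (hθ1 : θ < 1) :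
    (θ : ℂ) ≠ 0 ∧ (1 - θ : ℂ) ≠ 0 := by
  constructor
  · simpa using hθ0.ne'
  · simp only [ne_eq, sub_eq_zero]
    intro h
    have := congrArg Complex.re h
    simp at this; linarith

lemma opA_geom {θ : ℝ} (hθ0 : 0 < θ) (hθ1 : θ < 1) (z : ℂ) (hz : ‖(1 - θ : ℂ) * z‖ < 1) :
    opA (fun k => θ * (1 - θ) ^ k) (fun k => z ^ k) =
      fun l => (θ / (1 - (1 - θ : ℂ) * z)) * z ^ l := by
  obtain ⟨hθC, hθC'⟩ := theta_ne hθ0 hθ1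
  have hw1 : (1 - θ : ℂ) * z ≠ 1 := by
    intro h; rw [h] at hz; simp at hz
  have h2 : (1 - (1 - θ : ℂ) * z) ≠ 0 := by
    intro h
    exact hw1 (by linear_combination -h)
  funext l
  unfold opA
  rw [qtail_geo hθ0 hθ1]
  have h1 : ∀ k : ℕ, ((θ * (1 - θ) ^ (l + k) : ℝ) : ℂ) * z ^ (l + k)
      = ((θ : ℂ) * ((1 - θ : ℂ) * z) ^ l) * ((1 - θ : ℂ) * z) ^ k := by
    intro k
    push_cast
    rw [pow_add, mul_pow, mul_pow]
    ring
  rw [tsum_congr h1, tsum_mul_left, tsum_geometric_of_norm_lt_one hz]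
  have hpow : (((1 - θ) ^ l : ℝ) : ℂ) = (1 - θ : ℂ) ^ l := by push_cast; ring
  rw [hpow, mul_pow]
  field_simp

lemma opA_smul {p : ℕ → ℝ} (μ : ℂ) (f : ℕ → ℂ) :
    opA p (fun k => μ * f k) = fun l => μ * opA p f l := by
  funext l
  unfold opA
  rw [show (∑' k, ((p (l + k) : ℂ)) * (μ * f (l + k)))
      = μ * ∑' k, ((p (l + k) : ℂ)) * f (l + k) from by
    rw [← tsum_mul_left]; exact tsum_congr fun k => by ring]
  ring

lemma opA_affine {θ : ℝ} (hθ0 : 0 < θ) (hθ1 : θ < 1) (a : ℂ) :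
    opA (fun k => θ * (1 - θ) ^ k) (fun k => (k : ℂ) + a) =
      fun l : ℕ => (l : ℂ) + (a + ((1 - θ) / θ : ℝ)) := by
  obtain ⟨hθC, hθC'⟩ := theta_ne hθ0 hθ1
  have hu : ‖(1 - θ : ℂ)‖ < 1 := by
    rw [show (1 - θ : ℂ) = ((1 - θ : ℝ) : ℂ) by push_cast; ring, Complex.norm_real,
      Real.norm_eq_abs, abs_of_pos (by linarith)]
    linarith
  funext l
  unfold opA
  rw [qtail_geo hθ0 hθ1]
  have h1 : ∀ k : ℕ, ((θ * (1 - θ) ^ (l + k) : ℝ) : ℂ) * (((l + k : ℕ) : ℂ) + a)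
      = ((θ : ℂ) * (1 - θ : ℂ) ^ l) * ((k : ℂ) * (1 - θ : ℂ) ^ k)
        + ((θ : ℂ) * (1 - θ : ℂ) ^ l * ((l : ℂ) + a)) * (1 - θ : ℂ) ^ k := by
    intro k
    push_cast
    rw [pow_add]
    ring
  have hs1 : Summable fun k : ℕ => ((θ : ℂ) * (1 - θ : ℂ) ^ l) * ((k : ℂ) * (1 - θ : ℂ) ^ k) := by
    apply Summable.mul_left
    have := summable_pow_mul_geometric_of_norm_lt_one (R := ℂ) 1 hu
    simpa using this
  have hs2 : Summable fun k : ℕ => ((θ : ℂ) * (1 - θ : ℂ) ^ l * ((l : ℂ) + a)) * (1 - θ : ℂ) ^ k :=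
    (summable_geometric_of_norm_lt_one hu).mul_left _
  rw [tsum_congr h1, Summable.tsum_add hs1 hs2, tsum_mul_left, tsum_mul_left,
    tsum_coe_mul_geometric_of_norm_lt_one hu, tsum_geometric_of_norm_lt_one hu]
  have h2 : (1 : ℂ) - (1 - θ) = θ := by ring
  rw [h2]
  have hpow : (((1 - θ) ^ l : ℝ) : ℂ) = (1 - θ : ℂ) ^ l := by push_cast; ring
  rw [hpow]
  push_cast
  field_simp
  ring

lemma memDA_affine {θ : ℝ} (hθ0 : 0 < θ) (hθ1 : θ < 1) (a : ℂ) :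
    memDA (fun k => θ * (1 - θ) ^ k) (fun k => (k : ℂ) + a) := by
  unfold memDA
  have hu : ‖(1 - θ : ℝ)‖ < 1 := by
    rw [Real.norm_eq_abs, abs_of_pos (by linarith)]; linarith
  apply Summable.of_nonneg_of_le
    (f := fun k : ℕ => θ * ((k : ℝ) * (1 - θ) ^ k) + (θ * ‖a‖) * (1 - θ) ^ k)
  · intro k
    exact mul_nonneg (mul_nonneg hθ0.le (pow_nonneg (by linarith) k)) (norm_nonneg _)
  · intro k
    have h1 : ‖(k : ℂ) + a‖ ≤ (k : ℝ) + ‖a‖ := by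
      calc ‖(k : ℂ) + a‖ ≤ ‖(k : ℂ)‖ + ‖a‖ :=
        norm_add_le _ _
      _ = (k : ℝ) + ‖a‖ := by rw [Complex.norm_natCast]
    have h2 : (0 : ℝ) ≤ θ * (1 - θ) ^ k :=
      mul_nonneg hθ0.le (pow_nonneg (by linarith) k)
    show θ * (1 - θ) ^ k * ‖(k : ℂ) + a‖
        ≤ θ * ((k : ℝ) * (1 - θ) ^ k) + (θ * ‖a‖) * (1 - θ) ^ k
    calc θ * (1 - θ) ^ k * ‖(k : ℂ) + a‖
        ≤ θ * (1 - θ) ^ k * ((k : ℝ) + ‖a‖) :=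
          mul_le_mul_of_nonneg_left h1 h2
      _ = θ * ((k : ℝ) * (1 - θ) ^ k) + (θ * ‖a‖) * (1 - θ) ^ k := by ring
  · apply Summable.add
    · apply Summable.mul_left
      have := summable_pow_mul_geometric_of_norm_lt_one (R := ℝ) 1 hu
      simpa using this
    · exact (summable_geometric_of_norm_lt_one hu).mul_left _

lemma iterA_id {θ : ℝ} (hθ0 : 0 < θ) (hθ1 : θ < 1) (j : ℕ) :
    (opA (fun k => θ * (1 - θ) ^ k))^[j] (fun k => (k : ℂ)) =
      fun k : ℕ => (k : ℂ) + (j : ℂ) * ((1 - θ) / θ : ℝ) := by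
  induction j with
  | zero => funext k; simp
  | succ n ih =>
    rw [Function.iterate_succ_apply', ih]
    rw [show (fun k : ℕ => (k : ℂ) + n * ((1 - θ) / θ : ℝ))
        = fun k : ℕ => (k : ℂ) + ((n : ℂ) * ((1 - θ) / θ : ℝ)) from rfl]
    rw [opA_affine hθ0 hθ1]
    funext k
    push_cast
    ring

lemma iterA_geom {θ : ℝ} (hθ0 : 0 < θ) (hθ1 : θ < 1) (z : ℂ) (hz : ‖(1 - θ : ℂ) * z‖ < 1)
    (j : ℕ) :
    (opA (fun k => θ * (1 - θ) ^ k))^[j] (fun k => z ^ k) =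
      fun k : ℕ => (θ / (1 - (1 - θ : ℂ) * z)) ^ j * z ^ k := by
  induction j with
  | zero => funext k; simp
  | succ n ih =>
    rw [Function.iterate_succ_apply', ih, opA_smul, opA_geom hθ0 hθ1 z hz]
    funext k
    ring

lemma memDA_geom {θ : ℝ} (hθ0 : 0 < θ) (hθ1 : θ < 1) (μ z : ℂ)
    (hz : ‖(1 - θ : ℂ) * z‖ < 1) :
    memDA (fun k => θ * (1 - θ) ^ k) (fun k => μ * z ^ k) := by
  unfold memDA
  have key : ∀ k : ℕ, θ * (1 - θ) ^ k * ‖μ * z ^ k‖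
      = (θ * ‖μ‖) * ‖(1 - θ : ℂ) * z‖ ^ k := by
    intro k
    rw [norm_mul μ, norm_pow]
    rw [norm_mul, mul_pow]
    have : ‖(1 - θ : ℂ)‖ = 1 - θ := by
      rw [show (1 - θ : ℂ) = ((1 - θ : ℝ) : ℂ) by push_cast; ring, Complex.norm_real,
        Real.norm_eq_abs, abs_of_pos (by linarith)]
    rw [this]
    ring
  rw [show (fun k : ℕ => θ * (1 - θ) ^ k * ‖μ * z ^ k‖)
      = fun k : ℕ => (θ * ‖μ‖) * ‖(1 - θ : ℂ) * z‖ ^ k from funext key]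
  exact (summable_geometric_of_lt_one (norm_nonneg _) hz).mul_left _

/-- For every `s ≥ 5`, `γ₁ ≥ 1` and the geometric distribution with parameter
`θ ∈ (0,1)`, `θ < 2 cos(2π/5)`, the identity sequence is in `D(A^s)` and `B_s` is
not injective on `D(A^{s-1})`. -/
theorem opB_not_injective_of_five_le
    (θ : ℝ) (hθ : θ ∈ Set.Ioo (0 : ℝ) 1) (hθ5 : θ < 2 * Real.cos (2 * Real.pi / 5))
    (s : ℕ) (hs : 5 ≤ s) (γ₁ : ℝ) (hγ₁ : 1 ≤ γ₁) :
    memDAiter (fun k => θ * (1 - θ) ^ k) s (fun k => (k : ℂ)) ∧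
      ∃ v : ℕ → ℂ, v ≠ 0 ∧ memDAiter (fun k => θ * (1 - θ) ^ k) (s - 1) v ∧
        opB (fun k => θ * (1 - θ) ^ k) γ₁ s v = 0 := by
  obtain ⟨hθ0, hθ1⟩ := hθ
  obtain ⟨hθC, hθC'⟩ := theta_ne hθ0 hθ1
  have hγ0 : (0 : ℝ) < γ₁ := by linarith
  have hsne : (s : ℝ) ≠ 0 := by positivity
  -- the angle
  set φ : ℝ := 2 * Real.pi / s with hφdef
  have hπ := Real.pi_pos
  have hφ0 : 0 < φ := by positivity
  have hφ5 : φ ≤ 2 * Real.pi / 5 := by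
    apply div_le_div_of_nonneg_left (by positivity) (by norm_num)
    exact_mod_cast hs
  have hφπ : φ < Real.pi := by
    have : 2 * Real.pi / 5 < Real.pi := by linarith [hπ]
    linarith
  have hcos : Real.cos (2 * Real.pi / 5) ≤ Real.cos φ :=
    Real.cos_le_cos_of_nonneg_of_le_pi hφ0.le (by linarith) hφ5
  have hcospos : 0 < Real.cos (2 * Real.pi / 5) := by
    apply Real.cos_pos_of_mem_Ioo
    constructor <;> [linarith; linarith]
  -- r and the root
  set r : ℝ := θ / γ₁ with hrdef
  have hr0 : 0 < r := by positivity
  have hrlt : r < 2 * Real.cos φ := by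
    rw [hrdef, div_lt_iff₀ hγ0]
    calc θ < 2 * Real.cos (2 * Real.pi / 5) := hθ5
      _ ≤ 2 * Real.cos φ := by linarith
      _ ≤ 2 * Real.cos φ * γ₁ := by nlinarith [hcospos, hcos]
  set ζ : ℂ := Complex.exp (φ * Complex.I) with hζdef
  set w : ℂ := 1 - (r : ℂ) * Complex.exp (-φ * Complex.I) with hwdef
  -- ‖w‖ < 1
  have hwre : w.re = 1 - r * Real.cos φ := by
    rw [hwdef]
    simp [show (-φ : ℂ) * Complex.I = ((-φ : ℝ) : ℂ) * Complex.I by push_cast; ring,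
      Complex.exp_ofReal_mul_I_re, Complex.exp_ofReal_mul_I_im, Real.cos_neg]
  have hwim : w.im = r * Real.sin φ := by
    rw [hwdef]
    simp [show (-φ : ℂ) * Complex.I = ((-φ : ℝ) : ℂ) * Complex.I by push_cast; ring,
      Complex.exp_ofReal_mul_I_re, Complex.exp_ofReal_mul_I_im, Real.sin_neg]
  have hwnorm : ‖w‖ < 1 := by
    have hsq : Complex.normSq w < 1 := by
      rw [Complex.normSq_apply, hwre, hwim]
      have hpyth := Real.sin_sq_add_cos_sq φ
      nlinarith [mul_lt_mul_of_pos_right hrlt hr0, hpyth, hr0.le, Real.cos_le_one φ]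
    have h1 : ‖w‖ ^ 2 < 1 ^ 2 := by
      rw [Complex.sq_norm]; simpa using hsq
    have := lt_of_pow_lt_pow_left₀ 2 (by norm_num : (0:ℝ) ≤ 1) h1
    simpa using this
  -- the root z and eigenvalue
  set z : ℂ := w / (1 - θ : ℂ) with hzdef
  have hzw : (1 - θ : ℂ) * z = w := by
    rw [hzdef, mul_div_cancel₀ _ hθC']
  have hzlt : ‖(1 - θ : ℂ) * z‖ < 1 := by rw [hzw]; exact hwnorm
  have hγC : (γ₁ : ℂ) ≠ 0 := by
    simp only [ne_eq, Complex.ofReal_eq_zero]; linarith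
  have hζexp : ζ * Complex.exp (-φ * Complex.I) = 1 := by
    rw [hζdef, ← Complex.exp_add]
    rw [show (φ : ℂ) * Complex.I + (-φ) * Complex.I = 0 by ring, Complex.exp_zero]
  have hlam : (θ : ℂ) / (1 - (1 - θ : ℂ) * z) = (γ₁ : ℂ) * ζ := by
    rw [hzw]
    have h1w : (1 : ℂ) - w = (r : ℂ) * Complex.exp (-φ * Complex.I) := by
      rw [hwdef]; ring
    have hθr : (θ : ℂ) = (γ₁ : ℂ) * r := by
      rw [hrdef]; push_cast; field_simp
    rw [h1w, hθr]
    have hexpne : Complex.exp (-φ * Complex.I) ≠ 0 := Complex.exp_ne_zero _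
    have hrC : (r : ℂ) ≠ 0 := by
      simp only [ne_eq, Complex.ofReal_eq_zero]; linarith
    rw [div_eq_iff (mul_ne_zero hrC hexpne)]
    linear_combination -(γ₁ : ℂ) * (r : ℂ) * hζexp
  have hζs : ζ ^ s = 1 := by
    rw [hζdef, ← Complex.exp_nat_mul]
    rw [show (s : ℂ) * ((φ : ℂ) * Complex.I) = ((s * φ : ℝ) : ℂ) * Complex.I by
      push_cast; ring]
    rw [show (s : ℝ) * φ = 2 * Real.pi by rw [hφdef]; field_simp]
    push_cast
    exact Complex.exp_two_pi_mul_I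
  have hζ1 : ζ ≠ 1 := by
    intro h
    have : ζ.im = 0 := by rw [h]; simp
    rw [hζdef, Complex.exp_ofReal_mul_I_im] at this
    have := Real.sin_pos_of_pos_of_lt_pi hφ0 hφπ
    linarith
  constructor
  · -- identity in D(A^s)
    intro j _
    rw [iterA_id hθ0 hθ1 j]
    exact memDA_affine hθ0 hθ1 _
  · refine ⟨fun k => z ^ k, ?_, ?_, ?_⟩
    · intro h
      have := congrFun h 0
      simp at this
    · intro j _
      rw [iterA_geom hθ0 hθ1 z hzlt j]
      exact memDA_geom hθ0 hθ1 _ z hzlt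
    · funext l
      unfold opB
      have hiter : ∀ j : ℕ, (opA (fun k => θ * (1 - θ) ^ k))^[j] (fun k => z ^ k)
          = fun k : ℕ => ((γ₁ : ℂ) * ζ) ^ j * z ^ k := by
        intro j
        rw [iterA_geom hθ0 hθ1 z hzlt j, hlam]
      simp only [hiter]
      have hterm : ∀ k ∈ Finset.range s,
          (γ₁ : ℂ) ^ (s - 1 - k) * (((γ₁ : ℂ) * ζ) ^ k * z ^ l)
            = ((γ₁ : ℂ) ^ (s - 1) * z ^ l) * ζ ^ k := by
        intro k hk
        have hks : k ≤ s - 1 := Nat.le_sub_one_of_lt (Finset.mem_range.mp hk)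
        rw [mul_pow, show (γ₁ : ℂ) ^ (s - 1 - k) * ((γ₁ : ℂ) ^ k * ζ ^ k * z ^ l)
            = ((γ₁ : ℂ) ^ (s - 1 - k) * (γ₁ : ℂ) ^ k) * ζ ^ k * z ^ l by ring,
          ← pow_add, Nat.sub_add_cancel hks]
        ring
      rw [Finset.sum_congr rfl hterm, ← Finset.mul_sum]
      rw [geom_sum_eq hζ1 s, hζs]
      simp
end
end

section
/- Let λ ∈ ℂ, λ ≠ 0, and let x ∈ D(A) satisfy A x = λ x. Then for every i ≥ 0 one has x(i+1) = ((λ q_i − p_i)/(λ q_{i+1})) x(i); consequently x(k) = b_k(λ)·x(0) for every k ≥ 1, where b_k(λ) = ∏_{i=0}^{k−1} (λ q_i − p_i)/(λ q_{i+1}). In particular, if x(0) = 0 then x = 0. -/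
open scoped BigOperators

noncomputable section

/-- `b_k(λ) = ∏_{i=0}^{k-1} (λ q_i - p_i)/(λ q_{i+1})`. -/
def bcoef (p : ℕ → ℝ) (lam : ℂ) (k : ℕ) : ℂ :=
  ∏ i ∈ Finset.range k, (lam * qtail p i - p i) / (lam * qtail p (i + 1))

/-- If `x ∈ D(A)` is an eigenvector of `A` for a nonzero eigenvalue `λ`, then
`x(i+1) = ((λ q_i − p_i)/(λ q_{i+1})) x(i)` for all `i`, hence `x(k) = b_k(λ) x(0)`
for `k ≥ 1`; in particular `x(0) = 0` forces `x = 0`. -/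
theorem eigenvector_recursion
    (p : ℕ → ℝ) (hp : ∀ k, 0 < p k) (hsum : HasSum p 1)
    (lam : ℂ) (hlam : lam ≠ 0)
    (x : ℕ → ℂ) (hx : memDA p x) (heig : opA p x = fun l => lam * x l) :
    (∀ i : ℕ, x (i + 1) = ((lam * qtail p i - p i) / (lam * qtail p (i + 1))) * x i) ∧
      (∀ k : ℕ, 1 ≤ k → x k = bcoef p lam k * x 0) ∧
      (x 0 = 0 → x = 0) := by
  have hps : Summable p := hsum.summable
  -- positivity of tail sums
  have hqpos : ∀ l, 0 < qtail p l := by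
    intro l
    have hsl : Summable fun k => p (l + k) := by
      have := (summable_nat_add_iff l).2 hps
      exact this.congr fun k => by rw [add_comm]
    have h0 : p (l + 0) ≤ ∑' k, p (l + k) :=
      Summable.le_tsum hsl 0 fun j _ => (hp _).le
    calc (0:ℝ) < p (l + 0) := hp _
      _ ≤ qtail p l := h0
  have hqne : ∀ l, (qtail p l : ℂ) ≠ 0 := fun l => by
    exact_mod_cast Complex.ofReal_ne_zero.2 (ne_of_gt (hqpos l))
  -- summability of the series defining S
  have hSsum : ∀ l, Summable fun k => (p (l + k) : ℂ) * x (l + k) := by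
    intro l
    apply Summable.of_norm
    have hsl : Summable fun k => p (l + k) * ‖x (l + k)‖ := by
      have := (summable_nat_add_iff l).2 hx
      exact this.congr fun k => by rw [add_comm]
    refine hsl.congr fun k => ?_
    rw [norm_mul, Complex.norm_real, Real.norm_eq_abs,
      abs_of_pos (hp _)]
  set S : ℕ → ℂ := fun l => ∑' k, (p (l + k) : ℂ) * x (l + k) with hS
  -- from the eigenvalue equation: S l = lam * qtail l * x l
  have hSeq : ∀ l, S l = lam * (qtail p l : ℂ) * x l := by
    intro l
    have h := congrFun heig l
    simp only [opA] at h
    field_simp [hqne l] at h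
    show (∑' k, (p (l + k) : ℂ) * x (l + k)) = _
    rw [h]; ring
  -- splitting off the first term
  have hsplit : ∀ l, S l = (p l : ℂ) * x l + S (l + 1) := by
    intro l
    have := Summable.tsum_eq_zero_add (hSsum l)
    simp only [hS]
    rw [this, add_zero]
    congr 1
    refine tsum_congr fun k => ?_
    have : l + (k + 1) = l + 1 + k := by ring
    rw [this]
  -- the recursion
  have hrec : ∀ i : ℕ, x (i + 1) = ((lam * qtail p i - p i) / (lam * qtail p (i + 1))) * x i := by
    intro i
    have h1 : lam * (qtail p i : ℂ) * x i = (p i : ℂ) * x i + lam * (qtail p (i+1) : ℂ) * x (i+1) := by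
      rw [← hSeq, ← hSeq, hsplit]
    have hden : lam * (qtail p (i+1) : ℂ) ≠ 0 := mul_ne_zero hlam (hqne (i+1))
    rw [div_mul_eq_mul_div, eq_div_iff hden]
    linear_combination -h1
  refine ⟨hrec, ?_, ?_⟩
  · have hall : ∀ k : ℕ, x k = bcoef p lam k * x 0 := by
      intro k
      induction k with
      | zero => simp [bcoef]
      | succ n ih =>
        rw [hrec n, ih]
        simp only [bcoef, Finset.prod_range_succ]
        ring
    exact fun k _ => hall k
  · intro h0
    funext n
    induction n with
    | zero => exact h0
    | succ m ih =>
      simp only [Pi.zero_apply] at ih ⊢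
      rw [hrec m, ih, mul_zero]
end
end

section
/- A nonzero complex number λ is an eigenvalue of A — i.e., there exists a nonzero x ∈ D(A) with A x = λ x — if and only if Σ_{k=1}^∞ |b_k(λ)| p_k < ∞ and p_0 − λ + Σ_{k=1}^∞ b_k(λ) p_k = 0. -/
open scoped BigOperators

noncomputable section

namespace EigenAux

variable {p : ℕ → ℝ} {lam : ℂ}

lemma summable_shift (hs : Summable p) (l : ℕ) : Summable (fun k => p (l + k)) :=
  hs.comp_injective (add_right_injective l)

lemma qtail_pos (hp : ∀ k, 0 < p k) (hs : Summable p) (l : ℕ) : 0 < qtail p l :=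
  Summable.tsum_pos (summable_shift hs l) (fun i => (hp _).le) 0 (hp _)

lemma qtailC_ne (hp : ∀ k, 0 < p k) (hs : Summable p) (l : ℕ) :
    (qtail p l : ℂ) ≠ 0 :=
  Complex.ofReal_ne_zero.mpr (qtail_pos hp hs l).ne'

lemma qtail_succ (hs : Summable p) (l : ℕ) : qtail p l = p l + qtail p (l + 1) := by
  unfold qtail
  rw [Summable.tsum_eq_zero_add (summable_shift hs l)]
  congr 1
  exact tsum_congr fun k => by rw [show l + (k + 1) = (l + 1) + k from by omega]

lemma qtail_zero (hsum : HasSum p 1) : qtail p 0 = 1 := by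
  unfold qtail
  rw [tsum_congr (fun k => by rw [Nat.zero_add])]
  exact hsum.tsum_eq

lemma bcoef_zero : bcoef p lam 0 = 1 := by simp [bcoef]

lemma bcoef_succ (k : ℕ) :
    bcoef p lam (k + 1) =
      bcoef p lam k * ((lam * qtail p k - p k) / (lam * qtail p (k + 1))) :=
  Finset.prod_range_succ _ _

lemma denom_ne (hp : ∀ k, 0 < p k) (hs : Summable p) (hlam : lam ≠ 0) (k : ℕ) :
    lam * (qtail p (k + 1) : ℂ) ≠ 0 :=
  mul_ne_zero hlam (qtailC_ne hp hs (k + 1))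

lemma bcoef_rec (hp : ∀ k, 0 < p k) (hs : Summable p) (hlam : lam ≠ 0) (k : ℕ) :
    lam * (qtail p (k + 1) : ℂ) * bcoef p lam (k + 1) =
      (lam * qtail p k - p k) * bcoef p lam k := by
  rw [bcoef_succ]
  have h := denom_ne hp hs hlam k
  have h' := qtailC_ne hp hs (k + 1)
  field_simp

lemma summable_complex (hp : ∀ k, 0 < p k) {v : ℕ → ℂ} (hmem : memDA p v) (l : ℕ) :
    Summable (fun k => (p (l + k) : ℂ) * v (l + k)) := by
  apply Summable.of_norm
  have h := hmem.comp_injective (add_right_injective l)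
  refine h.congr fun k => ?_
  simp only [Function.comp_apply]
  rw [norm_mul, Complex.norm_real, Real.norm_eq_abs,
    abs_of_pos (hp _)]

lemma S_rec (hp : ∀ k, 0 < p k) {v : ℕ → ℂ} (hmem : memDA p v) (l : ℕ) :
    ∑' k, (p (l + k) : ℂ) * v (l + k) =
      (p l : ℂ) * v l + ∑' k, (p ((l + 1) + k) : ℂ) * v ((l + 1) + k) := by
  rw [Summable.tsum_eq_zero_add (summable_complex hp hmem l)]
  congr 1
  exact tsum_congr fun k => by rw [show l + (k + 1) = (l + 1) + k from by omega]

end EigenAux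

open EigenAux

/-- A nonzero `λ ∈ ℂ` is an eigenvalue of `A` iff `Σ_{k≥1} |b_k(λ)| p_k < ∞` and
`p_0 − λ + Σ_{k≥1} b_k(λ) p_k = 0`. -/
theorem eigenvalue_iff
    (p : ℕ → ℝ) (hp : ∀ k, 0 < p k) (hsum : HasSum p 1)
    (lam : ℂ) (hlam : lam ≠ 0) :
    (∃ x : ℕ → ℂ, x ≠ 0 ∧ memDA p x ∧ opA p x = fun l => lam * x l) ↔
      (Summable fun k : ℕ => ‖bcoef p lam (k + 1)‖ * p (k + 1)) ∧
        (p 0 : ℂ) - lam + ∑' k : ℕ, bcoef p lam (k + 1) * (p (k + 1) : ℂ) = 0 := by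
  have hs : Summable p := hsum.summable
  constructor
  · rintro ⟨x, hx0, hmem, heig⟩
    -- S l = λ q_l x l
    have hS : ∀ l, ∑' k, (p (l + k) : ℂ) * x (l + k) = lam * (qtail p l : ℂ) * x l := by
      intro l
      have h := congrFun heig l
      simp only [opA] at h
      have hq := qtailC_ne hp hs l
      field_simp at h
      rw [h]; ring
    -- recursion for x
    have hxrec : ∀ l, lam * (qtail p (l + 1) : ℂ) * x (l + 1) =
        (lam * qtail p l - p l) * x l := by
      intro l
      have h := S_rec hp hmem l
      rw [hS l, hS (l + 1)] at h
      linear_combination -h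
    -- x k = x 0 * b k
    have hxb : ∀ k, x k = x 0 * bcoef p lam k := by
      intro k
      induction k with
      | zero => simp [bcoef_zero]
      | succ n ih =>
        have h1 := hxrec n
        have h2 := bcoef_rec hp hs hlam n
        have hd := denom_ne hp hs hlam n
        rw [ih] at h1
        have : lam * (qtail p (n + 1) : ℂ) * x (n + 1) =
            lam * (qtail p (n + 1) : ℂ) * (x 0 * bcoef p lam (n + 1)) := by
          rw [h1]; linear_combination (-(x 0)) * h2
        exact mul_left_cancel₀ hd this
    have hx0ne : x 0 ≠ 0 := by
      intro h
      apply hx0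
      funext k
      rw [hxb k, h, zero_mul]; rfl
    constructor
    · -- summability
      have h1 : Summable (fun k => p (k + 1) * ‖x (k + 1)‖) :=
        hmem.comp_injective (add_left_injective 1)
      have h2 := h1.mul_left ((‖x 0‖)⁻¹)
      refine h2.congr fun k => ?_
      rw [hxb (k + 1), norm_mul]
      have : ‖x 0‖ ≠ 0 := by
        simpa using hx0ne
      field_simp
    · -- the equation
      have h0 := hS 0
      rw [qtail_zero hsum] at h0
      have hcongr : ∑' k, (p (0 + k) : ℂ) * x (0 + k) = ∑' k, (p k : ℂ) * x k :=
        tsum_congr fun k => by rw [Nat.zero_add]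
      rw [hcongr] at h0
      have hsum0 : Summable (fun k => (p k : ℂ) * x k) := by
        have := summable_complex hp hmem 0
        exact this.congr (fun k => by rw [Nat.zero_add]) |>.congr (fun k => rfl)
      have hsplit := Summable.tsum_eq_zero_add hsum0
      rw [hsplit] at h0
      -- h0 : p 0 * x 0 + ∑' k, p (k+1) * x (k+1) = lam * 1 * x 0
      have htail : ∑' k, (p (k + 1) : ℂ) * x (k + 1) =
          x 0 * ∑' k, bcoef p lam (k + 1) * (p (k + 1) : ℂ) := by
        rw [← tsum_mul_left]
        exact tsum_congr fun k => by rw [hxb (k + 1)]; ring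
      rw [htail] at h0
      push_cast at h0
      have : x 0 * ((p 0 : ℂ) - lam + ∑' k, bcoef p lam (k + 1) * (p (k + 1) : ℂ)) = 0 := by
        linear_combination h0
      rcases mul_eq_zero.mp this with h | h
      · exact absurd h hx0ne
      · exact h
  · rintro ⟨hb, heq⟩
    refine ⟨fun k => bcoef p lam k, ?_, ?_, ?_⟩
    · intro h
      have := congrFun h 0
      simp [bcoef_zero] at this
    · -- memDA
      have h1 : Summable (fun k => p (k + 1) * ‖bcoef p lam (k + 1)‖) :=
        hb.congr fun k => mul_comm _ _
      exact (summable_nat_add_iff 1).mp h1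
    · -- eigenvalue equation
      have hmem : memDA p (fun k => bcoef p lam k) := by
        have h1 : Summable (fun k => p (k + 1) * ‖bcoef p lam (k + 1)‖) :=
          hb.congr fun k => mul_comm _ _
        exact (summable_nat_add_iff 1).mp h1
      have hS : ∀ l, ∑' k, (p (l + k) : ℂ) * bcoef p lam (l + k) =
          lam * (qtail p l : ℂ) * bcoef p lam l := by
        intro l
        induction l with
        | zero =>
          have hcongr : ∑' k, (p (0 + k) : ℂ) * bcoef p lam (0 + k) =
              ∑' k, (p k : ℂ) * bcoef p lam k :=
            tsum_congr fun k => by rw [Nat.zero_add]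
          rw [hcongr]
          have hsum0 : Summable (fun k => (p k : ℂ) * bcoef p lam k) := by
            have := summable_complex hp hmem 0
            exact this.congr (fun k => by rw [Nat.zero_add])
          rw [Summable.tsum_eq_zero_add hsum0, bcoef_zero, qtail_zero hsum]
          have htail : ∑' k, (p (k + 1) : ℂ) * bcoef p lam (k + 1) =
              ∑' k, bcoef p lam (k + 1) * (p (k + 1) : ℂ) :=
            tsum_congr fun k => mul_comm _ _
          rw [htail]
          push_cast
          linear_combination heq
        | succ n ih =>
          have h := S_rec hp hmem n
          rw [ih] at h
          have h2 := bcoef_rec hp hs hlam n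
          have : ∑' k, (p ((n + 1) + k) : ℂ) * bcoef p lam ((n + 1) + k) =
              (lam * qtail p n - p n) * bcoef p lam n := by
            linear_combination -h
          rw [this, ← h2]
      funext l
      simp only [opA]
      rw [hS l]
      have hq := qtailC_ne hp hs l
      field_simp
end
end

section
/- For every probability distribution p = (p_k) on ℕ with p_k > 0 for all k, every real γ₁ > 0, every s ∈ {2,3,4} and every ℓ ∈ {1,…,s−1}, the complex number γ₁·exp(2πiℓ/s) is NOT an eigenvalue of A: there is no nonzero x ∈ D(A) with A x = γ₁·exp(2πiℓ/s)·x. -/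
open scoped BigOperators

noncomputable section

/-- For any probability distribution `p` with positive masses, `γ₁ > 0`, `s ∈ {2,3,4}`
and `ℓ ∈ {1,…,s−1}`, the number `γ₁ exp(2πiℓ/s)` is not an eigenvalue of `A`. -/
theorem not_eigenvalue_s_two_three_four
    (p : ℕ → ℝ) (hp : ∀ k, 0 < p k) (hsum : HasSum p 1)
    (γ₁ : ℝ) (hγ₁ : 0 < γ₁) (s : ℕ) (hs : s = 2 ∨ s = 3 ∨ s = 4)
    (ℓ : ℕ) (hℓ1 : 1 ≤ ℓ) (hℓs : ℓ ≤ s - 1) :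
    ¬ ∃ x : ℕ → ℂ, x ≠ 0 ∧ memDA p x ∧
      opA p x =
        fun l => (γ₁ : ℂ) * Complex.exp (2 * Real.pi * Complex.I * ℓ / s) * x l := by
  rintro ⟨x, hx0, hxD, hAx⟩
  have hsp : Summable p := hsum.summable
  set lam : ℂ := (γ₁ : ℂ) * Complex.exp (2 * Real.pi * Complex.I * ℓ / s) with hlam
  clear_value lam
  have hs0 : 0 < s := by rcases hs with h | h | h <;> omega
  have hsR : (0 : ℝ) < s := by exact_mod_cast hs0
  -- rewrite the exponent as a real angle times I
  have hθ : (2 * (Real.pi : ℂ) * Complex.I * ℓ / s) = ((2 * Real.pi * ℓ / s : ℝ) : ℂ) * Complex.I := by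
    push_cast
    ring
  set θ : ℝ := 2 * Real.pi * ℓ / s with hθdef
  -- the angle lies in [π/2, 3π/2]
  have hb : s ≤ 4 * ℓ ∧ 4 * ℓ ≤ 3 * s := by omega
  have hcos : Real.cos θ ≤ 0 := by
    apply Real.cos_nonpos_of_pi_div_two_le_of_le
    · rw [hθdef, le_div_iff₀ hsR]
      have h1 : (s : ℝ) ≤ 4 * ℓ := by exact_mod_cast hb.1
      nlinarith [Real.pi_pos]
    · rw [hθdef, div_le_iff₀ hsR]
      have h2 : 4 * (ℓ : ℝ) ≤ 3 * s := by exact_mod_cast hb.2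
      nlinarith [Real.pi_pos]
  have hRe : lam.re ≤ 0 := by
    rw [hlam, hθ]
    simp only [Complex.mul_re, Complex.ofReal_re, Complex.ofReal_im,
      Complex.exp_ofReal_mul_I_re, zero_mul, sub_zero]
    exact mul_nonpos_of_nonneg_of_nonpos hγ₁.le hcos
  have hlamabs : ‖lam‖ = γ₁ := by
    rw [hlam, hθ, norm_mul, Complex.norm_exp_ofReal_mul_I, mul_one,
      Complex.norm_real, Real.norm_eq_abs, abs_of_pos hγ₁]
  have hlamne : lam ≠ 0 := by
    intro h
    rw [h, norm_zero] at hlamabs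
    exact hγ₁.ne hlamabs
  -- basic summability facts
  set f : ℕ → ℂ := fun k => (p k : ℂ) * x k with hfdef
  have hf : Summable f := by
    apply Summable.of_norm
    have : (fun k => ‖f k‖) = fun k => p k * ‖x k‖ := by
      funext k
      rw [hfdef]
      simp only [norm_mul, Complex.norm_real, Real.norm_of_nonneg (hp k).le]
    rw [this]
    exact hxD
  set S : ℕ → ℂ := fun l => ∑' k, f (l + k) with hSdef
  have hqsum : ∀ l, Summable fun k => p (l + k) :=
    fun l => hsp.comp_injective (add_right_injective l)
  have hq : ∀ l, 0 < qtail p l :=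
    fun l => Summable.tsum_pos (hqsum l) (fun k => (hp _).le) 0 (hp _)
  have hqC : ∀ l, (qtail p l : ℂ) ≠ 0 := fun l => by exact_mod_cast (hq l).ne'
  -- the eigenvalue equation
  have hSx : ∀ l, S l = lam * qtail p l * x l := by
    intro l
    have h := congrFun hAx l
    have h2 : (1 / (qtail p l : ℂ)) * S l = lam * x l := h
    rw [one_div, inv_mul_eq_div, div_eq_iff (hqC l)] at h2
    rw [h2]
    ring
  -- the one-step recursion
  have hrec : ∀ l, S l = f l + S (l + 1) := by
    intro l
    have hg : Summable fun k => f (l + k) := hf.comp_injective (add_right_injective l)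
    have := Summable.tsum_eq_zero_add hg
    simp only [add_zero] at this
    rw [hSdef]
    simp only
    rw [this]
    congr 1
    exact tsum_congr fun k => by rw [show l + (k + 1) = (l + 1) + k by omega]
  have hstep : ∀ l, S (l + 1) = (lam * qtail p l - p l) * x l := by
    intro l
    have h1 := hrec l
    have h2 := hSx l
    have : S (l + 1) = S l - f l := by rw [h1]; ring
    rw [this, h2, hfdef]
    ring
  -- key inequality : |lam| q ≤ |lam q - p| when Re lam ≤ 0
  have key : ∀ q pr : ℝ, 0 ≤ q → 0 ≤ pr →
      ‖lam‖ * q ≤ ‖lam * q - pr‖ := by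
    intro q pr hq0 hpr
    have h1 : (‖lam * q - pr‖) ^ 2 = (lam.re * q - pr) ^ 2 + (lam.im * q) ^ 2 := by
      rw [Complex.sq_norm, Complex.normSq_apply]
      simp only [Complex.sub_re, Complex.sub_im, Complex.mul_re, Complex.mul_im,
        Complex.ofReal_re, Complex.ofReal_im]
      ring
    have h2 : (‖lam‖ * q) ^ 2 = (lam.re * q) ^ 2 + (lam.im * q) ^ 2 := by
      rw [mul_pow, Complex.sq_norm, Complex.normSq_apply]
      ring
    nlinarith [norm_nonneg (lam * q - pr), mul_nonneg (norm_nonneg lam) hq0,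
      mul_nonneg (mul_nonneg (neg_nonneg.mpr hRe) hq0) hpr]
  -- |S| is nondecreasing
  have habs : ∀ l, ‖S l‖ ≤ ‖S (l + 1)‖ := by
    intro l
    rw [hSx l, hstep l]
    calc ‖lam * (qtail p l : ℂ) * x l‖
        = ‖lam * (qtail p l : ℂ)‖ * ‖x l‖ := norm_mul _ _
      _ ≤ ‖lam * (qtail p l : ℂ) - (p l : ℂ)‖ * ‖x l‖ := by
          refine mul_le_mul_of_nonneg_right ?_ (norm_nonneg _)
          have h := key (qtail p l) (p l) (hq l).le (hp l).le
          have hL : ‖lam * (qtail p l : ℂ)‖ = ‖lam‖ * qtail p l := by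
            rw [norm_mul, Complex.norm_real, Real.norm_eq_abs, abs_of_pos (hq l)]
          rw [hL]
          exact h
      _ = ‖(lam * (qtail p l : ℂ) - (p l : ℂ)) * x l‖ := (norm_mul _ _).symm
  have hmono : Monotone fun l => ‖S l‖ := monotone_nat_of_le_succ habs
  -- S tends to 0
  have htend : Filter.Tendsto S Filter.atTop (nhds 0) := by
    have h := tendsto_sum_nat_add f
    have hS' : S = fun i => ∑' k, f (k + i) := by
      funext i
      exact tsum_congr fun k => by rw [add_comm]
    rw [hS']
    exact h
  -- hence each S l vanishes
  have hS0 : ∀ l, S l = 0 := by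
    intro l
    have h1 : Filter.Tendsto (fun m => ‖S m‖) Filter.atTop (nhds 0) := by
      have := (continuous_norm.tendsto 0).comp htend
      simpa [Function.comp_def] using this
    have h2 : ‖S l‖ ≤ 0 :=
      ge_of_tendsto h1 (Filter.eventually_atTop.mpr ⟨l, fun m hm => hmono hm⟩)
    have := norm_nonneg (S l)
    have h3 : ‖S l‖ = 0 := le_antisymm h2 this
    exact norm_eq_zero.mp h3
  -- hence x = 0
  apply hx0
  funext l
  have h := hSx l
  rw [hS0 l] at h
  have := (mul_eq_zero.mp h.symm)
  rcases this with h' | h'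
  · rcases mul_eq_zero.mp h' with h'' | h''
    · exact absurd h'' hlamne
    · exact absurd h'' (hqC l)
  · exact h'
end
end

section
/- Let p be the geometric distribution p_k = θ(1−θ)^k with θ ∈ (0,1) satisfying θ < 2·cos(2π/5), let s ≥ 5 be an integer and γ₁ ≥ 1 a real. Set λ = γ₁·exp(2πi/s). Then the sequence x(k) = ((λ − θ)/(λ(1−θ)))^k, k ≥ 0, is a nonzero element of D(A) and satisfies A x = λ x; in particular λ is an eigenvalue of A. -/
open scoped BigOperators

noncomputable section

/-- For the geometric distribution with `θ ∈ (0,1)`, `θ < 2 cos(2π/5)`, `s ≥ 5`,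
`γ₁ ≥ 1` and `λ = γ₁ exp(2πi/s)`, the sequence `x(k) = ((λ−θ)/(λ(1−θ)))^k` is a
nonzero element of `D(A)` with `A x = λ x`; hence `λ` is an eigenvalue of `A`. -/
theorem geometric_eigenvector
    (θ : ℝ) (hθ : θ ∈ Set.Ioo (0 : ℝ) 1) (hθ5 : θ < 2 * Real.cos (2 * Real.pi / 5))
    (s : ℕ) (hs : 5 ≤ s) (γ₁ : ℝ) (hγ₁ : 1 ≤ γ₁) :
    (fun k : ℕ =>
        (((γ₁ : ℂ) * Complex.exp (2 * Real.pi * Complex.I / s) - θ) /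
          ((γ₁ : ℂ) * Complex.exp (2 * Real.pi * Complex.I / s) * (1 - θ))) ^ k) ≠ 0 ∧
      memDA (fun k => θ * (1 - θ) ^ k)
        (fun k : ℕ =>
          (((γ₁ : ℂ) * Complex.exp (2 * Real.pi * Complex.I / s) - θ) /
            ((γ₁ : ℂ) * Complex.exp (2 * Real.pi * Complex.I / s) * (1 - θ))) ^ k) ∧
      opA (fun k => θ * (1 - θ) ^ k)
          (fun k : ℕ =>
            (((γ₁ : ℂ) * Complex.exp (2 * Real.pi * Complex.I / s) - θ) /
              ((γ₁ : ℂ) * Complex.exp (2 * Real.pi * Complex.I / s) * (1 - θ))) ^ k) =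
        fun l : ℕ =>
          (γ₁ : ℂ) * Complex.exp (2 * Real.pi * Complex.I / s) *
            (((γ₁ : ℂ) * Complex.exp (2 * Real.pi * Complex.I / s) - θ) /
              ((γ₁ : ℂ) * Complex.exp (2 * Real.pi * Complex.I / s) * (1 - θ))) ^ l := by
  obtain ⟨hθ0, hθ1⟩ := hθ
  have hθ1' : (0:ℝ) < 1 - θ := by linarith
  have hπ := Real.pi_pos
  have hs5 : (5:ℝ) ≤ (s:ℝ) := by exact_mod_cast hs
  have hs0 : (0:ℝ) < (s:ℝ) := by linarith
  have hγ0 : (0:ℝ) < γ₁ := by linarith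
  set φ : ℝ := 2 * Real.pi / s with hφdef
  have hexparg : (2 * Real.pi * Complex.I / s) = (φ:ℂ) * Complex.I := by
    rw [hφdef]
    have : ((s:ℝ):ℂ) ≠ 0 := by exact_mod_cast ne_of_gt hs0
    push_cast
    field_simp
  rw [hexparg]
  set lam : ℂ := (γ₁:ℂ) * Complex.exp ((φ:ℂ) * Complex.I) with hlamdef
  have habslam : ‖lam‖ = γ₁ := by
    rw [hlamdef, norm_mul, Complex.norm_exp_ofReal_mul_I, Complex.norm_real, Real.norm_eq_abs,
      abs_of_pos hγ0, mul_one]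
  have hlam0 : lam ≠ 0 := by
    intro h; rw [h, norm_zero] at habslam; linarith
  have hφpos : 0 < φ := by rw [hφdef]; positivity
  have hφle : φ ≤ 2 * Real.pi / 5 := by
    rw [hφdef]; gcongr
  have h25lt : 2 * Real.pi / 5 < Real.pi / 2 := by linarith
  have hcos5pos : 0 < Real.cos (2 * Real.pi / 5) :=
    Real.cos_pos_of_mem_Ioo ⟨by linarith, h25lt⟩
  have hcosle : Real.cos (2 * Real.pi / 5) ≤ Real.cos φ :=
    Real.cos_le_cos_of_nonneg_of_le_pi hφpos.le (by linarith) hφle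
  have hcospos : 0 < Real.cos φ := lt_of_lt_of_le hcos5pos hcosle
  have hθcos : θ < 2 * γ₁ * Real.cos φ := by nlinarith
  have hnsq : Complex.normSq (lam - (θ:ℂ)) = γ₁^2 - 2*γ₁*θ*Real.cos φ + θ^2 := by
    rw [Complex.normSq_apply]
    simp [hlamdef, Complex.mul_re, Complex.mul_im, Complex.exp_ofReal_mul_I_re,
      Complex.exp_ofReal_mul_I_im]
    nlinarith [Real.sin_sq_add_cos_sq φ]
  have habslt : ‖lam - (θ:ℂ)‖ < γ₁ := by
    have h2 : (‖lam - (θ:ℂ)‖)^2 < γ₁^2 := by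
      rw [Complex.sq_norm, hnsq]; nlinarith
    exact lt_of_pow_lt_pow_left₀ 2 hγ0.le h2
  set z : ℂ := (lam - (θ:ℂ)) / lam with hzdef
  have hzabs : ‖z‖ < 1 := by
    rw [hzdef, norm_div, habslam, div_lt_one hγ0]; exact habslt
  set μ : ℂ := (lam - (θ:ℂ)) / (lam * (1 - (θ:ℂ))) with hμdef
  have h1θ : ((1:ℂ) - (θ:ℂ)) ≠ 0 := by
    intro h
    have : ((1 - θ : ℝ):ℂ) = 0 := by push_cast; exact h
    exact (ne_of_gt hθ1') (by exact_mod_cast this)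
  have hzμ : ((1:ℂ) - (θ:ℂ)) * μ = z := by
    rw [hμdef, hzdef]; field_simp
  have habsz : ‖z‖ = (1 - θ) * ‖μ‖ := by
    rw [← hzμ, norm_mul]
    congr 1
    have : ((1:ℂ) - (θ:ℂ)) = ((1 - θ : ℝ):ℂ) := by push_cast; ring
    rw [this, Complex.norm_real, Real.norm_eq_abs, abs_of_pos hθ1']
  have h1z : (1:ℂ) - z = (θ:ℂ) / lam := by
    rw [hzdef]; field_simp; ring
  refine ⟨?_, ?_, ?_⟩
  · intro h
    have h0 := congrFun h 0
    simp at h0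
  · show Summable fun k => (θ * (1-θ)^k) * ‖μ^k‖
    have heq : (fun k => (θ * (1-θ)^k) * ‖μ^k‖)
        = fun k => θ * (‖z‖)^k := by
      funext k
      rw [norm_pow, habsz, mul_pow]
      ring
    rw [heq]
    exact (summable_geometric_of_lt_one (norm_nonneg z) hzabs).mul_left θ
  · funext l
    have hq : qtail (fun k => θ * (1-θ)^k) l = (1-θ)^l := by
      rw [qtail]
      have heq : (fun k => θ * (1-θ)^(l+k)) = fun k => (θ * (1-θ)^l) * (1-θ)^k := by
        funext k; rw [pow_add]; ring
      simp only [heq]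
      rw [tsum_mul_left, tsum_geometric_of_lt_one hθ1'.le (by linarith)]
      have : 1 - (1-θ) = θ := by ring
      rw [this]
      field_simp
    have hts : ∑' (k:ℕ), ((θ * (1-θ)^(l+k) : ℝ):ℂ) * μ^(l+k)
        = ((θ:ℂ) * ((1:ℂ)-(θ:ℂ))^l * μ^l) * (1 - z)⁻¹ := by
      have heq : (fun k : ℕ => ((θ * (1-θ)^(l+k) : ℝ):ℂ) * μ^(l+k))
          = fun k : ℕ => ((θ:ℂ) * ((1:ℂ)-(θ:ℂ))^l * μ^l) * z^k := by
        funext k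
        push_cast
        rw [← hzμ, pow_add, pow_add, mul_pow]
        ring
      rw [heq, tsum_mul_left, tsum_geometric_of_norm_lt_one hzabs]
    show (1 / ((qtail (fun k => θ * (1-θ)^k) l : ℝ):ℂ)) *
        ∑' (k:ℕ), ((θ * (1-θ)^(l+k) : ℝ):ℂ) * μ^(l+k) = lam * μ^l
    rw [hq, hts, h1z]
    have hpow : (((1-θ)^l : ℝ):ℂ) = ((1:ℂ)-(θ:ℂ))^l := by push_cast; ring
    rw [hpow]
    have hθC : (θ:ℂ) ≠ 0 := by exact_mod_cast ne_of_gt hθ0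
    have hpow0 : ((1:ℂ)-(θ:ℂ))^l ≠ 0 := pow_ne_zero _ h1θ
    field_simp
end
end

section
/- If v is a real sequence in D(A) that is strictly increasing (v(k) < v(k+1) for all k), then A v is strictly increasing: (A v)(l) < (A v)(l+1) for all l ≥ 0. -/
open scoped BigOperators

noncomputable section

/-- The operator `A` on real sequences: `(A v)(l) = (1/q_l) Σ_{k=l}^∞ p_k v(k)`. -/
def opAR (p : ℕ → ℝ) (v : ℕ → ℝ) : ℕ → ℝ :=
  fun l => (1 / qtail p l) * ∑' k, p (l + k) * v (l + k)

/-- Membership in the domain `D(A) = {v : Σ_k p_k |v(k)| < ∞}` (real sequences). -/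
def memDAR (p : ℕ → ℝ) (v : ℕ → ℝ) : Prop :=
  Summable fun k => p k * |v k|

/-- If `v ∈ D(A)` is a strictly increasing real sequence, then `A v` is strictly
increasing. -/
theorem opA_strictMono
    (p : ℕ → ℝ) (hp : ∀ k, 0 < p k) (hsum : HasSum p 1)
    (v : ℕ → ℝ) (hv : memDAR p v) (hmono : ∀ k, v k < v (k + 1)) :
    ∀ l : ℕ, opAR p v l < opAR p v (l + 1) := by
  have hps : Summable p := hsum.summable
  have hpv : Summable (fun k => p k * v k) := by
    apply Summable.of_abs
    have : (fun k => |p k * v k|) = fun k => p k * |v k| := by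
      funext k
      rw [abs_mul, abs_of_pos (hp k)]
    rw [this]; exact hv
  have hptail : ∀ l : ℕ, Summable (fun k => p (l + k)) := by
    intro l
    simpa [add_comm] using (summable_nat_add_iff l).2 hps
  have hpvtail : ∀ l : ℕ, Summable (fun k => p (l + k) * v (l + k)) := by
    intro l
    simpa [add_comm] using (summable_nat_add_iff l).2 hpv
  have hq : ∀ l : ℕ, 0 < qtail p l := by
    intro l
    exact Summable.tsum_pos (hptail l) (fun k => (hp _).le) 0 (hp _)
  have hsm : StrictMono v := strictMono_nat_of_lt_succ hmono
  intro l
  -- recursion identities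
  have hqrec : qtail p l = p l + qtail p (l + 1) := by
    have h := Summable.tsum_eq_zero_add (hptail l)
    rw [qtail, qtail, h, Nat.add_zero]
    congr 1
    apply tsum_congr
    intro k
    congr 1
    omega
  have hSrec : (∑' k, p (l + k) * v (l + k))
      = p l * v l + ∑' k, p (l + 1 + k) * v (l + 1 + k) := by
    have h := Summable.tsum_eq_zero_add (hpvtail l)
    rw [h, Nat.add_zero]
    congr 1
    apply tsum_congr
    intro k
    have h3 : l + (k + 1) = l + 1 + k := by omega
    rw [h3]
  set q := qtail p (l + 1) with hqdef
  set S := ∑' k, p (l + 1 + k) * v (l + 1 + k) with hSdef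
  -- key inequality : q * v l < S
  have hkey : q * (v l) < S := by
    have h1 : q * v l = ∑' k, p (l + 1 + k) * v l := by
      rw [tsum_mul_right]; rfl
    rw [h1]
    apply Summable.tsum_lt_tsum (i := 0)
    · intro k
      exact mul_le_mul_of_nonneg_left (hsm (by omega : l < l + 1 + k)).le (hp _).le
    · exact mul_lt_mul_of_pos_left (hsm (by omega : l < l + 1 + 0)) (hp _)
    · exact (hptail (l + 1)).mul_right _
    · exact hpvtail (l + 1)
  have hql := hq l
  have hq1 := hq (l + 1)
  have hpl := hp l
  show (1 / qtail p l) * ∑' k, p (l + k) * v (l + k)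
      < (1 / qtail p (l + 1)) * ∑' k, p (l + 1 + k) * v (l + 1 + k)
  rw [hqrec, hSrec]
  rw [div_mul_eq_mul_div, div_mul_eq_mul_div, div_lt_div_iff₀ (by rw [hqrec] at hql; exact hql) hq1]
  nlinarith [mul_lt_mul_of_pos_left hkey hpl]

end
end

section
/- Let N ≥ 1 be a finite integer and let p = (p_0,…,p_N) be a probability distribution on {0,1,…,N} with p_k > 0 for all k ≤ N; let A be the corresponding (N+1)×(N+1) upper-triangular operator. Let s ≥ 1 and suppose (A^s id)(l) = β₀ + β₁ l for all l ∈ {0,…,N}, with β₁ > 0. Let γ₁ = β₁^{1/s} (the positive real s-th root) and γ₀ = β₀ / (Σ_{k=0}^{s−1} γ₁^k). Then (A id)(l) = γ₀ + γ₁ l for all l ∈ {0,…,N}. -/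
open scoped BigOperators

noncomputable section

/-- Tail sum `q_l = Σ_{k=l}^N p_k` for a distribution on `{0,…,N}` (indexed by `Fin (N+1)`). -/
def qtailFin {N : ℕ} (p : Fin (N + 1) → ℝ) (l : Fin (N + 1)) : ℝ :=
  ∑ k ∈ Finset.univ.filter (fun k => l ≤ k), p k

/-- The operator `A` on `ℝ^{N+1}`: `(A v)(l) = (1/q_l) Σ_{k=l}^N p_k v(k)`. -/
def opAFin {N : ℕ} (p : Fin (N + 1) → ℝ) (v : Fin (N + 1) → ℝ) : Fin (N + 1) → ℝ :=
  fun l => (1 / qtailFin p l) * ∑ k ∈ Finset.univ.filter (fun k => l ≤ k), p k * v k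

namespace RecordsAux

variable {N : ℕ} {p : Fin (N + 1) → ℝ}

lemma qtail_pos (hp : ∀ k, 0 < p k) (l : Fin (N + 1)) : 0 < qtailFin p l :=
  Finset.sum_pos (fun k _ => hp k) ⟨l, by simp⟩

lemma filter_eq_singleton (l : Fin (N + 1)) (hl : (l : ℕ) = N) :
    Finset.univ.filter (fun k => l ≤ k) = {l} := by
  ext k
  have hk := k.isLt
  simp only [Finset.mem_filter, Finset.mem_univ, true_and, Finset.mem_singleton,
    Fin.le_def, Fin.ext_iff]
  omega

lemma opA_top (hp : ∀ k, 0 < p k) (w : Fin (N + 1) → ℝ) (l : Fin (N + 1))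
    (hl : (l : ℕ) = N) : opAFin p w l = w l := by
  have h := filter_eq_singleton l hl
  have hq : qtailFin p l = p l := by rw [qtailFin, h, Finset.sum_singleton]
  simp only [opAFin]
  rw [h, Finset.sum_singleton, hq]
  field_simp [(hp l).ne']

lemma filter_split (l l1 : Fin (N + 1)) (hl : (l : ℕ) < N) (hl1 : (l1 : ℕ) = (l : ℕ) + 1) :
    Finset.univ.filter (fun k => l ≤ k)
      = insert l (Finset.univ.filter (fun k => l1 ≤ k)) := by
  ext k
  have hk := k.isLt
  simp only [Finset.mem_filter, Finset.mem_univ, true_and, Finset.mem_insert,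
    Fin.le_def, Fin.ext_iff, hl1]
  omega

lemma notmem (l l1 : Fin (N + 1)) (hl1 : (l1 : ℕ) = (l : ℕ) + 1) :
    l ∉ Finset.univ.filter (fun k => l1 ≤ k) := by
  simp [Fin.le_def, hl1]

lemma qtail_split (l l1 : Fin (N + 1)) (hl : (l : ℕ) < N) (hl1 : (l1 : ℕ) = (l : ℕ) + 1) :
    qtailFin p l = p l + qtailFin p l1 := by
  rw [qtailFin, filter_split l l1 hl hl1, Finset.sum_insert (notmem l l1 hl1), qtailFin]

lemma opA_rec (hp : ∀ k, 0 < p k) (w : Fin (N + 1) → ℝ) (l l1 : Fin (N + 1))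
    (hl : (l : ℕ) < N) (hl1 : (l1 : ℕ) = (l : ℕ) + 1) :
    opAFin p w l = (p l * w l + qtailFin p l1 * opAFin p w l1) / qtailFin p l := by
  have hq1 : qtailFin p l1 ≠ 0 := (qtail_pos hp l1).ne'
  have hq : qtailFin p l ≠ 0 := (qtail_pos hp l).ne'
  simp only [opAFin]
  rw [filter_split l l1 hl hl1, Finset.sum_insert (notmem l l1 hl1)]
  field_simp

end RecordsAux

/-- Finite support case: if `(A^s id)(l) = β₀ + β₁ l` on `{0,…,N}` with `β₁ > 0`, then
`(A id)(l) = γ₀ + γ₁ l` with `γ₁ = β₁^{1/s}` and `γ₀ = β₀ / Σ_{k=0}^{s−1} γ₁^k`. -/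
theorem adjacent_linearity_of_nonadjacent_finite
    (N : ℕ) (hN : 1 ≤ N) (p : Fin (N + 1) → ℝ)
    (hp : ∀ k, 0 < p k) (hsum : ∑ k, p k = 1)
    (s : ℕ) (hs : 1 ≤ s) (β₀ β₁ : ℝ) (hβ₁ : 0 < β₁)
    (hlin : ∀ l : Fin (N + 1),
      ((opAFin p)^[s] (fun k => ((k : ℕ) : ℝ))) l = β₀ + β₁ * (l : ℕ)) :
    ∀ l : Fin (N + 1), opAFin p (fun k => ((k : ℕ) : ℝ)) l =
      β₀ / (∑ k ∈ Finset.range s, (β₁ ^ ((1 : ℝ) / s)) ^ k) +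
        β₁ ^ ((1 : ℝ) / s) * (l : ℕ) := by
  classical
  set γ : ℝ := β₁ ^ ((1 : ℝ) / s) with hγdef
  have hγpos : 0 < γ := Real.rpow_pos_of_pos hβ₁ _
  have hsne : (s : ℝ) ≠ 0 := Nat.cast_ne_zero.mpr (by omega)
  have hγs : γ ^ s = β₁ := by
    rw [hγdef, ← Real.rpow_natCast (β₁ ^ ((1 : ℝ) / s)) s, ← Real.rpow_mul hβ₁.le,
      one_div_mul_cancel hsne, Real.rpow_one]
  set v : ℕ → Fin (N + 1) → ℝ := fun j => (opAFin p)^[j] (fun k => ((k : ℕ) : ℝ)) with hvdef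
  have hv0 : ∀ l : Fin (N + 1), v 0 l = (l : ℕ) := fun l => rfl
  have hvsucc : ∀ (j : ℕ) (l : Fin (N + 1)), v (j + 1) l = opAFin p (v j) l := by
    intro j l
    rw [hvdef]
    simp only [Function.iterate_succ_apply']
  have hvtop : ∀ j : ℕ, ∀ l : Fin (N + 1), (l : ℕ) = N → v j l = (N : ℝ) := by
    intro j
    induction j with
    | zero => intro l hl; rw [hv0, hl]
    | succ j ih =>
      intro l hl
      rw [hvsucc, RecordsAux.opA_top hp _ l hl, ih l hl]
  have hvs : ∀ l : Fin (N + 1), v s l = β₀ + β₁ * (l : ℕ) := fun l => hlin l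
  have hβ₀ : β₀ = (N : ℝ) * (1 - β₁) := by
    have h := hvs (Fin.last N)
    rw [hvtop s (Fin.last N) (Fin.val_last N), Fin.val_last] at h
    linarith
  -- main downward induction
  have key : ∀ m : ℕ, ∀ l : Fin (N + 1), N ≤ (l : ℕ) + m → ∀ j : ℕ,
      v j l = (N : ℝ) * (1 - γ ^ j) + γ ^ j * (l : ℕ) := by
    intro m
    induction m with
    | zero =>
      intro l hl j
      have hlN : (l : ℕ) = N := by have := l.isLt; omega
      rw [hvtop j l hlN, hlN]; ring
    | succ m ih =>
      intro l _ j
      by_cases hlN : (l : ℕ) = N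
      · rw [hvtop j l hlN, hlN]; ring
      · have hlN' : (l : ℕ) < N := by have := l.isLt; omega
        set l1 : Fin (N + 1) := ⟨(l : ℕ) + 1, by omega⟩ with hl1def
        have hl1 : (l1 : ℕ) = (l : ℕ) + 1 := rfl
        have IH : ∀ j : ℕ,
            v j l1 = (N : ℝ) * (1 - γ ^ j) + γ ^ j * ((l : ℕ) + 1 : ℝ) := by
          intro j
          have h := ih l1 (by rw [hl1]; omega) j
          rw [h, hl1]; push_cast; ring
        have hplpos : 0 < p l := hp l
        have hq1pos : 0 < qtailFin p l1 := RecordsAux.qtail_pos hp l1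
        have hsplit : qtailFin p l = p l + qtailFin p l1 :=
          RecordsAux.qtail_split l l1 hlN' hl1
        set q1 : ℝ := qtailFin p l1 with hq1def
        have hQpos : 0 < p l + q1 := by linarith
        have hQne : p l + q1 ≠ 0 := hQpos.ne'
        set ρ : ℝ := p l / (p l + q1) with hρdef
        have hρpos : 0 < ρ := div_pos hplpos hQpos
        set D : ℝ := (1 - γ) * ((N : ℝ) - (l : ℕ)) with hDdef
        set c : ℝ := (q1 / (p l + q1)) * (γ + D) - D with hcdef
        set x : ℕ → ℝ :=
          fun j => v j l - ((N : ℝ) * (1 - γ ^ j) + γ ^ j * (l : ℕ)) with hxdef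
        have hrec : ∀ j : ℕ, x (j + 1) = ρ * x j + γ ^ j * c := by
          intro j
          have h1 : v (j + 1) l
              = (p l * v j l + q1 * v (j + 1) l1) / (p l + q1) := by
            rw [hvsucc j l, RecordsAux.opA_rec hp (v j) l l1 hlN' hl1,
              ← hvsucc j l1, hsplit]
          simp only [hxdef]
          rw [h1, IH (j + 1), hρdef, hcdef, hDdef]
          field_simp
          ring
        have hx0 : x 0 = 0 := by
          simp only [hxdef]
          rw [hv0]
          simp
        set S : ℕ → ℝ :=
          fun j => ∑ i ∈ Finset.range j, ρ ^ (j - 1 - i) * γ ^ i with hSdef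
        have hS0 : S 0 = 0 := by simp [hSdef]
        have hSsucc : ∀ j : ℕ, S (j + 1) = ρ * S j + γ ^ j := by
          intro j
          simp only [hSdef]
          rw [Finset.sum_range_succ]
          have h2 : j + 1 - 1 - j = 0 := by omega
          rw [h2, pow_zero, one_mul, Finset.mul_sum]
          congr 1
          apply Finset.sum_congr rfl
          intro i hi
          have hij : i < j := Finset.mem_range.mp hi
          have h3 : j + 1 - 1 - i = (j - 1 - i) + 1 := by omega
          rw [h3, pow_succ]
          ring
        have hSnonneg : ∀ j : ℕ, 0 ≤ S j := by
          intro j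
          apply Finset.sum_nonneg
          intro i _
          positivity
        have hxS : ∀ j : ℕ, x j = c * S j := by
          intro j
          induction j with
          | zero => rw [hx0, hS0, mul_zero]
          | succ j ihj => rw [hrec j, ihj, hSsucc j]; ring
        have hxs : x s = 0 := by
          simp only [hxdef]
          rw [hvs l, hγs, hβ₀]
          ring
        have hSspos : 0 < S s := by
          obtain ⟨t, rfl⟩ : ∃ t, s = t + 1 := ⟨s - 1, by omega⟩
          rw [hSsucc t]
          have := hSnonneg t
          have := pow_pos hγpos t
          nlinarith
        have hc0 : c = 0 := by
          have h := hxS s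
          rw [hxs] at h
          rcases mul_eq_zero.mp h.symm with h' | h'
          · exact h'
          · exact absurd h' hSspos.ne'
        have hxj : x j = 0 := by rw [hxS j, hc0, zero_mul]
        have := hxj
        simp only [hxdef] at this
        linarith
  -- conclusion
  intro l
  have h1 : opAFin p (fun k => ((k : ℕ) : ℝ)) l = v 1 l := by
    rw [hvdef]
    simp only [Function.iterate_one]
  have h2 : v 1 l = (N : ℝ) * (1 - γ) + γ * (l : ℕ) := by
    have := key N l (by omega) 1
    rwa [pow_one] at this
  have hSumPos : 0 < ∑ k ∈ Finset.range s, γ ^ k :=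
    Finset.sum_pos (fun i _ => pow_pos hγpos i) (Finset.nonempty_range_iff.mpr (by omega))
  have hgeom : (1 - γ) * ∑ k ∈ Finset.range s, γ ^ k = 1 - γ ^ s := by
    have := geom_sum_mul γ s
    nlinarith [this]
  have hβ₀' : β₀ / (∑ k ∈ Finset.range s, γ ^ k) = (N : ℝ) * (1 - γ) := by
    rw [hβ₀, ← hγs, ← hgeom]
    field_simp
  rw [h1, h2, hβ₀']
end
end

section
/- Let s ∈ {1,2,3,4}, suppose the identity sequence id(k) = k belongs to D(A^s), and suppose (A^s id)(l) = β₀ + l for all l ∈ ℕ for some β₀ > 0 (i.e., the regression coefficient β₁ equals 1). Then p is the geometric distribution with parameter s/(s+β₀): p_k = (s/(s+β₀))·(β₀/(s+β₀))^k for all k ∈ ℕ. -/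
open scoped BigOperators

noncomputable section

/-- Membership in the domain `D(A^m) = {v : A^k v ∈ D(A) for k = 0,…,m-1}`. -/
def memDAiterR (p : ℕ → ℝ) (m : ℕ) (v : ℕ → ℝ) : Prop :=
  ∀ k < m, memDAR p ((opAR p)^[k] v)

section Aux

open Filter

variable {p : ℕ → ℝ}

lemma shift_summable {f : ℕ → ℝ} (hf : Summable f) (l : ℕ) :
    Summable fun k => f (l + k) := by
  simpa [add_comm] using (summable_nat_add_iff l).2 hf

lemma q_pos (hp : ∀ k, 0 < p k) (hsm : Summable p) (l : ℕ) : 0 < qtail p l :=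
  Summable.tsum_pos (shift_summable hsm l) (fun k => (hp _).le) 0 (hp _)

lemma q_rec (hsm : Summable p) (l : ℕ) : qtail p l = p l + qtail p (l + 1) := by
  have h := Summable.tsum_eq_zero_add (shift_summable hsm l)
  have h2 : (∑' k, p (l + (k + 1))) = ∑' k, p (l + 1 + k) :=
    tsum_congr fun k => by ring_nf
  simpa [qtail, h2] using h

lemma q_le_one (hp : ∀ k, 0 < p k) (hsum : HasSum p 1) (l : ℕ) : qtail p l ≤ 1 := by
  induction l with
  | zero => simp [qtail, hsum.tsum_eq]
  | succ n ih =>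
    have := q_rec hsum.summable n
    have := hp n
    linarith

lemma q_tendsto (hsm : Summable p) : Tendsto (qtail p) atTop (nhds 0) := by
  have h := tendsto_sum_nat_add p
  have : qtail p = fun i => ∑' k, p (k + i) := by
    funext i; exact tsum_congr fun k => by rw [add_comm]
  rw [this]; exact h

lemma summable_mul_of_memDAR (hp : ∀ k, 0 < p k) {v : ℕ → ℝ} (hv : memDAR p v) :
    Summable fun k => p k * v k := by
  refine Summable.of_abs ?_
  have : (fun k => |p k * v k|) = fun k => p k * |v k| :=
    funext fun k => by rw [abs_mul, abs_of_pos (hp k)]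
  rw [this]; exact hv

lemma shift_summable_mul {v : ℕ → ℝ} (hv : Summable fun k => p k * v k) (l : ℕ) :
    Summable fun k => p (l + k) * v (l + k) := by
  simpa [add_comm] using (summable_nat_add_iff (f := fun k => p k * v k) l).2 hv

lemma opAR_mul_q (hp : ∀ k, 0 < p k) (hsm : Summable p) (v : ℕ → ℝ) (l : ℕ) :
    qtail p l * opAR p v l = ∑' k, p (l + k) * v (l + k) := by
  rw [opAR, one_div, ← mul_assoc, mul_inv_cancel₀ (q_pos hp hsm l).ne', one_mul]

lemma opAR_rec (hp : ∀ k, 0 < p k) (hsm : Summable p) {v : ℕ → ℝ}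
    (hv : Summable fun k => p k * v k) (l : ℕ) :
    qtail p l * opAR p v l = p l * v l + qtail p (l + 1) * opAR p v (l + 1) := by
  rw [opAR_mul_q hp hsm, opAR_mul_q hp hsm]
  have h := Summable.tsum_eq_zero_add (shift_summable_mul hv l)
  have h2 : (∑' k, p (l + (k + 1)) * v (l + (k + 1))) = ∑' k, p (l + 1 + k) * v (l + 1 + k) :=
    tsum_congr fun k => by rw [show l + (k + 1) = l + 1 + k by ring]
  simpa [h2] using h

lemma vanish (hp : ∀ k, 0 < p k) (hsm : Summable p) {F : ℕ → ℝ} {C : ℝ}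
    (hmono : ∀ l, F l ≤ F (l + 1)) (hbd : ∀ l, F l ≤ C * qtail p l) (l : ℕ) :
    F l ≤ 0 := by
  have hq0 : Tendsto (fun L => C * qtail p L) atTop (nhds 0) := by
    simpa using (q_tendsto hsm).const_mul C
  have hmono' : Monotone F := monotone_nat_of_le_succ hmono
  exact ge_of_tendsto hq0 (eventually_atTop.2 ⟨l, fun L hL => (hmono' hL).trans (hbd L)⟩)

lemma pos_of_mul_pos' {a b : ℝ} (ha : 0 < a) (h : 0 < a * b) : 0 < b := by
  by_contra hb
  push_neg at hb
  nlinarith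

lemma mode_scalar (hp : ∀ k, 0 < p k) (hsum : HasSum p 1) {d : ℕ → ℝ} {B : ℝ}
    (hrel : ∀ l, qtail p (l + 1) * d (l + 1) = (qtail p l + p l) * d l)
    (hbd : ∀ l, |d l| ≤ B) (l : ℕ) : d l = 0 := by
  have hsm := hsum.summable
  set F : ℕ → ℝ := fun l => qtail p l * |d l| with hF
  have hmono : ∀ m, F m ≤ F (m + 1) := by
    intro m
    have h1 : F (m + 1) = |qtail p (m + 1) * d (m + 1)| := by
      simp only [hF, abs_mul, abs_of_pos (q_pos hp hsm (m + 1))]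
    have hqm := q_pos hp hsm m
    have hpm := hp m
    rw [h1, hrel m, abs_mul, abs_of_pos (by linarith : (0:ℝ) < qtail p m + p m)]
    simp only [hF]
    nlinarith [abs_nonneg (d m)]
  have hbd' : ∀ m, F m ≤ B * qtail p m := by
    intro m
    have hq := q_pos hp hsm m
    have := hbd m
    simp only [hF]
    nlinarith
  have h0 := vanish hp hsm hmono hbd' l
  have hq := q_pos hp hsm l
  have habs := abs_nonneg (d l)
  have : |d l| = 0 := by
    simp only [hF] at h0
    nlinarith
  exact abs_eq_zero.1 this

lemma mode_i (hp : ∀ k, 0 < p k) (hsum : HasSum p 1) {x y : ℕ → ℝ} {B : ℝ}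
    (hx : ∀ l, qtail p (l + 1) * x (l + 1) = qtail p l * x l + p l * y l)
    (hy : ∀ l, qtail p (l + 1) * y (l + 1) = qtail p l * y l - p l * x l)
    (hbd : ∀ l, x l ^ 2 + y l ^ 2 ≤ B) (l : ℕ) : x l = 0 ∧ y l = 0 := by
  have hsm := hsum.summable
  set F : ℕ → ℝ := fun l => qtail p l ^ 2 * (x l ^ 2 + y l ^ 2) with hF
  have key : ∀ m, F (m + 1) = (qtail p m ^ 2 + p m ^ 2) * (x m ^ 2 + y m ^ 2) := by
    intro m
    have h1 : F (m + 1) = (qtail p (m + 1) * x (m + 1)) ^ 2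
        + (qtail p (m + 1) * y (m + 1)) ^ 2 := by simp only [hF]; ring
    rw [h1, hx m, hy m]; ring
  have hmono : ∀ m, F m ≤ F (m + 1) := by
    intro m; rw [key m]
    simp only [hF]
    nlinarith [sq_nonneg (p m), sq_nonneg (x m), sq_nonneg (y m)]
  have hbd' : ∀ m, F m ≤ B * qtail p m := by
    intro m
    have hq := q_pos hp hsm m
    have hq1 := q_le_one hp hsum m
    have h2 := hbd m
    have hN : (0:ℝ) ≤ x m ^ 2 + y m ^ 2 := by positivity
    have h3 : qtail p m * (x m ^ 2 + y m ^ 2) ≤ qtail p m * B :=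
      mul_le_mul_of_nonneg_left h2 hq.le
    have h4 : 0 ≤ (qtail p m - qtail p m ^ 2) * (x m ^ 2 + y m ^ 2) :=
      mul_nonneg (by nlinarith) hN
    simp only [hF]
    nlinarith
  have h0 := vanish hp hsm hmono hbd' l
  have hq := q_pos hp hsm l
  simp only [hF] at h0
  have hq2 : 0 < qtail p l ^ 2 := by positivity
  have hN : x l ^ 2 + y l ^ 2 ≤ 0 := by
    by_contra h
    push_neg at h
    nlinarith
  have hx0 : x l ^ 2 = 0 := le_antisymm (by nlinarith [sq_nonneg (y l)]) (sq_nonneg _)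
  have hy0 : y l ^ 2 = 0 := le_antisymm (by nlinarith [sq_nonneg (x l)]) (sq_nonneg _)
  exact ⟨pow_eq_zero_iff two_ne_zero |>.1 hx0, pow_eq_zero_iff two_ne_zero |>.1 hy0⟩

lemma mode_omega3 (hp : ∀ k, 0 < p k) (hsum : HasSum p 1) {u v : ℕ → ℝ} {B : ℝ}
    (hu : ∀ l, qtail p (l + 1) * u (l + 1) = qtail p l * u l + p l * u l + p l * v l)
    (hv : ∀ l, qtail p (l + 1) * v (l + 1) = qtail p l * v l - p l * u l)
    (hbd : ∀ l, u l ^ 2 + u l * v l + v l ^ 2 ≤ B) (l : ℕ) : u l = 0 ∧ v l = 0 := by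
  have hsm := hsum.summable
  set F : ℕ → ℝ := fun l => qtail p l ^ 2 * (u l ^ 2 + u l * v l + v l ^ 2) with hF
  have key : ∀ m, F (m + 1) = (qtail p m ^ 2 + qtail p m * p m + p m ^ 2)
      * (u m ^ 2 + u m * v m + v m ^ 2) := by
    intro m
    have h1 : F (m + 1) = (qtail p (m + 1) * u (m + 1)) ^ 2
        + (qtail p (m + 1) * u (m + 1)) * (qtail p (m + 1) * v (m + 1))
        + (qtail p (m + 1) * v (m + 1)) ^ 2 := by simp only [hF]; ring
    rw [h1, hu m, hv m]; ring
  have hmono : ∀ m, F m ≤ F (m + 1) := by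
    intro m; rw [key m]
    have hqm := q_pos hp hsm m
    have hpm := hp m
    have hN : (0:ℝ) ≤ u m ^ 2 + u m * v m + v m ^ 2 := by
      nlinarith [sq_nonneg (2 * u m + v m), sq_nonneg (v m)]
    have h4 : 0 ≤ (qtail p m * p m + p m ^ 2) * (u m ^ 2 + u m * v m + v m ^ 2) :=
      mul_nonneg (by nlinarith) hN
    simp only [hF]
    nlinarith
  have hbd' : ∀ m, F m ≤ B * qtail p m := by
    intro m
    have hq := q_pos hp hsm m
    have hq1 := q_le_one hp hsum m
    have h2 := hbd m
    have hN : (0:ℝ) ≤ u m ^ 2 + u m * v m + v m ^ 2 := by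
      nlinarith [sq_nonneg (2 * u m + v m), sq_nonneg (v m)]
    have h3 : qtail p m * (u m ^ 2 + u m * v m + v m ^ 2) ≤ qtail p m * B :=
      mul_le_mul_of_nonneg_left h2 hq.le
    have h4 : 0 ≤ (qtail p m - qtail p m ^ 2) * (u m ^ 2 + u m * v m + v m ^ 2) :=
      mul_nonneg (by nlinarith) hN
    simp only [hF]
    nlinarith
  have h0 := vanish hp hsm hmono hbd' l
  have hq := q_pos hp hsm l
  simp only [hF] at h0
  have hq2 : 0 < qtail p l ^ 2 := by positivity
  have hN : u l ^ 2 + u l * v l + v l ^ 2 ≤ 0 := by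
    by_contra h
    push_neg at h
    nlinarith
  have hv2 : v l ^ 2 = 0 :=
    le_antisymm (by nlinarith [sq_nonneg (2 * u l + v l)]) (sq_nonneg _)
  have hv0 : v l = 0 := pow_eq_zero_iff two_ne_zero |>.1 hv2
  have hu2 : u l ^ 2 = 0 := by
    rw [hv0] at hN
    exact le_antisymm (by nlinarith) (sq_nonneg _)
  exact ⟨pow_eq_zero_iff two_ne_zero |>.1 hu2, hv0⟩

end Aux

/-- For `s ∈ {1,2,3,4}`, if `(A^s id)(l) = β₀ + l` with `β₀ > 0` (regression slope
`β₁ = 1`), then `p` is geometric with parameter `s/(s+β₀)`. -/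
theorem geometric_characterization_slope_one
    (p : ℕ → ℝ) (hp : ∀ k, 0 < p k) (hsum : HasSum p 1)
    (s : ℕ) (hs : s = 1 ∨ s = 2 ∨ s = 3 ∨ s = 4) (β₀ : ℝ) (hβ₀ : 0 < β₀)
    (hid : memDAiterR p s (fun k => (k : ℝ)))
    (hlin : ∀ l : ℕ, ((opAR p)^[s] (fun k => (k : ℝ))) l = β₀ + l) :
    ∀ k : ℕ, p k = (s / (s + β₀)) * (β₀ / (s + β₀)) ^ k := by
  have hsm : Summable p := hsum.summable
  have hs1 : 1 ≤ s := by rcases hs with h | h | h | h <;> omega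
  set g : ℕ → ℕ → ℝ := fun j => (opAR p)^[j] (fun k => (k : ℝ)) with hgdef
  have hg0 : ∀ l, g 0 l = l := fun l => rfl
  have hgs : ∀ l, g s l = β₀ + l := hlin
  have hgsucc : ∀ j, g (j + 1) = opAR p (g j) := by
    intro j
    simp only [hgdef]
    exact Function.iterate_succ_apply' _ _ _
  -- summability of p * g j for all j ≤ s
  have hSpv : ∀ j, j ≤ s → Summable fun k => p k * g j k := by
    intro j hj
    rcases Nat.lt_or_ge j s with hj' | hj'
    · exact summable_mul_of_memDAR hp (hid j hj')
    · have hjs : j = s := le_antisymm hj hj'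
      subst hjs
      have hidm : Summable fun k => p k * ((k : ℕ) : ℝ) := by
        have := summable_mul_of_memDAR hp (hid 0 hs1)
        simpa using this
      have h2 : Summable fun k => p k * (β₀ + (k : ℝ)) := by
        have := (hsm.mul_right β₀).add hidm
        exact this.congr fun k => by ring
      exact h2.congr fun k => by rw [← hgs k]
  -- one-step recursion for g
  have hrec : ∀ j, j < s → ∀ l,
      qtail p l * g (j + 1) l = p l * g j l + qtail p (l + 1) * g (j + 1) (l + 1) := by
    intro j hj l
    rw [hgsucc j]
    exact opAR_rec hp hsm (hSpv j hj.le) l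
  -- the increments
  set w : ℕ → ℕ → ℝ := fun j l => g (j + 1) l - g j l with hwdef
  have hS : ∀ l, (∑ j ∈ Finset.range s, w j l) = β₀ := by
    intro l
    have := Finset.sum_range_sub (fun j => g j l) s
    simp only [hwdef]
    rw [this, hgs l, hg0 l]
    ring
  have hwrec : ∀ j, j + 1 < s → ∀ l,
      qtail p l * w (j + 1) l = p l * w j l + qtail p (l + 1) * w (j + 1) (l + 1) := by
    intro j hj l
    have e1 := hrec (j + 1) hj l
    have e2 := hrec j (by omega) l
    simp only [hwdef]
    linear_combination e1 - e2
  have hwrap : ∀ l,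
      qtail p l * w 0 l = p l * w (s - 1) l + qtail p (l + 1) * w 0 (l + 1) := by
    intro l
    have e1 := hrec 0 (by omega) l
    have e2 := hrec (s - 1) (by omega) l
    have hs' : s - 1 + 1 = s := by omega
    rw [hs'] at e2
    rw [hgs l, hgs (l + 1)] at e2
    rw [hg0 l] at e1
    have e3 := q_rec hsm l
    simp only [hwdef, hs', hg0, hgs]
    push_cast at e2 ⊢
    linear_combination e1 - e2 + β₀ * e3
  -- positivity of the increments
  have hwpos : ∀ j, j < s → ∀ l, 0 < w j l := by
    intro j
    induction j with
    | zero =>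
      intro _ l
      have hq := q_pos hp hsm l
      have s1 : Summable fun k => p (l + k) * g 0 (l + k) :=
        shift_summable_mul (hSpv 0 (by omega)) l
      have s2 : Summable fun k => p (l + k) * (l : ℝ) := (shift_summable hsm l).mul_right _
      have key : qtail p l * w 0 l = ∑' k, p (l + k) * (k : ℝ) := by
        simp only [hwdef]
        rw [mul_sub, hgsucc 0, opAR_mul_q hp hsm, hg0 l]
        have hql : qtail p l * (l : ℝ) = ∑' k, p (l + k) * (l : ℝ) := by
          rw [qtail, tsum_mul_right]
        rw [hql, ← Summable.tsum_sub s1 s2]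
        refine tsum_congr fun k => ?_
        have hg0' : g 0 (l + k) = (l : ℝ) + k := by rw [hg0]; push_cast; ring
        rw [hg0']
        ring
      have s3 : Summable fun k => p (l + k) * (k : ℝ) := by
        refine (s1.sub s2).congr fun k => ?_
        have hg0' : g 0 (l + k) = (l : ℝ) + k := by rw [hg0]; push_cast; ring
        rw [hg0']
        ring
      have hpos0 : 0 < ∑' k, p (l + k) * (k : ℝ) := by
        refine Summable.tsum_pos s3 (fun k => mul_nonneg (hp _).le (Nat.cast_nonneg k)) 1 ?_
        have := hp (l + 1)
        simpa using this
      exact pos_of_mul_pos' hq (key ▸ hpos0)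
    | succ n ih =>
      intro hn l
      have hn' : n < s := by omega
      have hq := q_pos hp hsm l
      have s2 : Summable fun k => p (l + k) * g (n + 1) (l + k) :=
        shift_summable_mul (hSpv (n + 1) (by omega)) l
      have s2' : Summable fun k => p (l + k) * g n (l + k) :=
        shift_summable_mul (hSpv n (by omega)) l
      have k1 : qtail p l * g (n + 1 + 1) l = ∑' k, p (l + k) * g (n + 1) (l + k) := by
        rw [hgsucc (n + 1)]
        exact opAR_mul_q hp hsm _ l
      have k2 : qtail p l * g (n + 1) l = ∑' k, p (l + k) * g n (l + k) := by
        rw [hgsucc n]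
        exact opAR_mul_q hp hsm _ l
      have key : qtail p l * w (n + 1) l = ∑' k, p (l + k) * w n (l + k) := by
        simp only [hwdef]
        rw [mul_sub, k1, k2, ← Summable.tsum_sub s2 s2']
        exact tsum_congr fun k => by ring
      have s3 : Summable fun k => p (l + k) * w n (l + k) := by
        refine (s2.sub s2').congr fun k => ?_
        simp only [hwdef]
        ring
      have hpos0 : 0 < ∑' k, p (l + k) * w n (l + k) := by
        refine Summable.tsum_pos s3 (fun k => mul_nonneg (hp _).le (ih hn' (l + k)).le) 0 ?_
        exact mul_pos (hp _) (ih hn' (l + 0))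
      exact pos_of_mul_pos' hq (key ▸ hpos0)
  have hwle : ∀ j, j < s → ∀ l, w j l ≤ β₀ := by
    intro j hj l
    have h1 : w j l ≤ ∑ i ∈ Finset.range s, w i l :=
      Finset.single_le_sum (f := fun i => w i l)
        (fun i hi => (hwpos i (Finset.mem_range.1 hi) l).le) (Finset.mem_range.2 hj)
    rw [hS l] at h1
    exact h1
  clear_value w
  -- key step: w 0 is the constant β₀ / s
  have hkey : ∀ l, w 0 l = β₀ / s := by
    rcases hs with rfl | rfl | rfl | rfl
    · -- s = 1
      intro l
      have h0 := hS l
      rw [Finset.sum_range_one] at h0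
      norm_num
      exact h0
    · -- s = 2
      have e1 := hwrec 0 (by norm_num)
      have e0 := hwrap
      norm_num at e0
      have hrel : ∀ l, qtail p (l + 1) * (w 0 (l + 1) - w 1 (l + 1)) =
          (qtail p l + p l) * (w 0 l - w 1 l) := by
        intro l
        linear_combination e1 l - e0 l
      have hbdd : ∀ l, |w 0 l - w 1 l| ≤ β₀ := by
        intro l
        have h1 := hwpos 0 (by norm_num) l
        have h2 := hwpos 1 (by norm_num) l
        have h3 := hwle 0 (by norm_num) l
        have h4 := hwle 1 (by norm_num) l
        rw [abs_le]
        constructor <;> linarith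
      have hd := mode_scalar hp hsum hrel hbdd
      intro l
      have hsl := hS l
      have hd' := hd l
      rw [Finset.sum_range_succ, Finset.sum_range_one] at hsl
      norm_num
      linarith
    · -- s = 3
      have e1 := hwrec 0 (by norm_num)
      have e2 := hwrec 1 (by norm_num)
      have e0 := hwrap
      norm_num at e0
      have hu : ∀ l, qtail p (l + 1) * ((w 0 (l+1) - w 1 (l+1))) =
          qtail p l * (w 0 l - w 1 l) + p l * (w 0 l - w 1 l) + p l * (w 1 l - w 2 l) := by
        intro l
        linear_combination e1 l - e0 l
      have hv : ∀ l, qtail p (l + 1) * ((w 1 (l+1) - w 2 (l+1))) =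
          qtail p l * (w 1 l - w 2 l) - p l * (w 0 l - w 1 l) := by
        intro l
        linear_combination e2 l - e1 l
      have hbdd : ∀ l, (w 0 l - w 1 l) ^ 2 + (w 0 l - w 1 l) * (w 1 l - w 2 l)
          + (w 1 l - w 2 l) ^ 2 ≤ 3 * β₀ ^ 2 := by
        intro l
        have h1 := hwpos 0 (by norm_num) l
        have h2 := hwpos 1 (by norm_num) l
        have h3 := hwpos 2 (by norm_num) l
        have h4 := hwle 0 (by norm_num) l
        have h5 := hwle 1 (by norm_num) l
        have h6 := hwle 2 (by norm_num) l
        nlinarith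
      have huv := mode_omega3 hp hsum hu hv hbdd
      intro l
      obtain ⟨ha, hb⟩ := huv l
      have hsl := hS l
      rw [Finset.sum_range_succ, Finset.sum_range_succ, Finset.sum_range_one] at hsl
      norm_num
      linarith
    · -- s = 4
      have e1 := hwrec 0 (by norm_num)
      have e2 := hwrec 1 (by norm_num)
      have e3 := hwrec 2 (by norm_num)
      have e0 := hwrap
      norm_num at e0
      have hreld : ∀ l, qtail p (l + 1) * ((w 0 (l+1) - w 1 (l+1) + w 2 (l+1) - w 3 (l+1))) =
          (qtail p l + p l) * (w 0 l - w 1 l + w 2 l - w 3 l) := by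
        intro l
        linear_combination e1 l - e0 l + e3 l - e2 l
      have hx : ∀ l, qtail p (l + 1) * ((w 0 (l+1) - w 2 (l+1))) =
          qtail p l * (w 0 l - w 2 l) + p l * (w 1 l - w 3 l) := by
        intro l
        linear_combination e2 l - e0 l
      have hy : ∀ l, qtail p (l + 1) * ((w 1 (l+1) - w 3 (l+1))) =
          qtail p l * (w 1 l - w 3 l) - p l * (w 0 l - w 2 l) := by
        intro l
        linear_combination e3 l - e1 l
      have hbddd : ∀ l, |w 0 l - w 1 l + w 2 l - w 3 l| ≤ 2 * β₀ := by
        intro l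
        have h1 := hwpos 0 (by norm_num) l
        have h2 := hwpos 1 (by norm_num) l
        have h3 := hwpos 2 (by norm_num) l
        have h4 := hwpos 3 (by norm_num) l
        have h5 := hwle 0 (by norm_num) l
        have h6 := hwle 1 (by norm_num) l
        have h7 := hwle 2 (by norm_num) l
        have h8 := hwle 3 (by norm_num) l
        rw [abs_le]
        constructor <;> linarith
      have hbdxy : ∀ l, (w 0 l - w 2 l) ^ 2 + (w 1 l - w 3 l) ^ 2 ≤ 2 * β₀ ^ 2 := by
        intro l
        have h1 := hwpos 0 (by norm_num) l
        have h2 := hwpos 1 (by norm_num) l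
        have h3 := hwpos 2 (by norm_num) l
        have h4 := hwpos 3 (by norm_num) l
        have h5 := hwle 0 (by norm_num) l
        have h6 := hwle 1 (by norm_num) l
        have h7 := hwle 2 (by norm_num) l
        have h8 := hwle 3 (by norm_num) l
        nlinarith
      have hd := mode_scalar hp hsum hreld hbddd
      have hxy := mode_i hp hsum hx hy hbdxy
      intro l
      obtain ⟨ha, hb⟩ := hxy l
      have hdl := hd l
      have hsl := hS l
      rw [Finset.sum_range_succ, Finset.sum_range_succ, Finset.sum_range_succ,
        Finset.sum_range_one] at hsl
      norm_num
      linarith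
  -- derive the geometric recursion for q
  have hsR : (0:ℝ) < s := by exact_mod_cast hs1
  have hsne : (s:ℝ) ≠ 0 := hsR.ne'
  set c : ℝ := β₀ / s with hcdef
  have hc : (s:ℝ) * c = β₀ := by rw [hcdef]; field_simp
  have hg1 : ∀ l, g 1 l = l + c := by
    intro l
    have := hkey l
    simp only [hwdef, hg0] at this
    linarith
  have hq' : ∀ l, qtail p (l + 1) = c * p l := by
    intro l
    have e1 := hrec 0 hs1 l
    rw [hg0 l, hg1 l, hg1 (l + 1)] at e1
    have e3 := q_rec hsm l
    push_cast at e1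
    linear_combination ((l:ℝ) + c) * e3 - e1
  have hsb : (0:ℝ) < (s:ℝ) + β₀ := by positivity
  set r : ℝ := β₀ / ((s:ℝ) + β₀) with hrdef
  have hr : ∀ l, qtail p (l + 1) = r * qtail p l := by
    intro l
    have e3 := q_rec hsm l
    have e4 : (s:ℝ) * qtail p (l + 1) = β₀ * p l := by
      rw [hq' l, ← hc]; ring
    rw [hrdef, div_mul_eq_mul_div, eq_div_iff hsb.ne']
    linear_combination e4 - β₀ * e3
  have hq0 : qtail p 0 = 1 := by
    have : qtail p 0 = ∑' k, p k := tsum_congr fun k => by rw [zero_add]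
    rw [this, hsum.tsum_eq]
  have hqpow : ∀ l, qtail p l = r ^ l := by
    intro l
    induction l with
    | zero => simpa using hq0
    | succ n ih => rw [hr n, ih]; ring
  intro k
  have hpk : p k = qtail p k - qtail p (k + 1) := by
    have := q_rec hsm k
    linarith
  rw [hpk, hqpow k, hqpow (k + 1)]
  have h1r : 1 - r = (s:ℝ) / ((s:ℝ) + β₀) := by
    rw [hrdef]
    field_simp
    ring
  rw [← h1r, hrdef]
  ring
end
end
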